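/- arXiv:2311.17448 — 8 statements merged into one kernel-verified Lean document; each statement's English description precedes it below -/
import Mathlib

section
/- Let N be a unitarily-invariant norm on M_n(ℂ), let Y ∈ M_n(ℂ), and let f : [0,∞) → [0,∞) be concave. Then N(f(|Y|)) ≤ N(I) · f(N(Y)/N(I)), where |Y| = (Y*Y)^{1/2} and I is the identity matrix. -/
open scoped ComplexOrder Matrix.Norms.L2Operator

/-- Monotonicity sub-lemma: a concave nonnegative function on `[0,∞)` is monotone. -/
lemma concave_mono (f : ℝ → ℝ) (hf : ConcaveOn ℝ (Set.Ici 0) f)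
    (hf0 : ∀ x : ℝ, 0 ≤ x → 0 ≤ f x) {x y : ℝ} (hx : 0 ≤ x) (hxy : x < y) : f x ≤ f y := by
  by_contra h
  push_neg at h
  have hyx : 0 < y - x := by linarith
  set c := (f y - f x) / (y - x) with hc
  have hcneg : c < 0 := div_neg_of_neg_of_pos (by linarith) hyx
  have hcne : c ≠ 0 := ne_of_lt hcneg
  have hfy : 0 ≤ f y := hf0 y (by linarith)
  have hpos : 0 < (f y + 1) / (-c) := div_pos (by linarith) (by linarith)
  set z := y + (f y + 1) / (-c) with hz
  have hyz : y < z := by rw [hz]; linarith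
  have h3 := hf.slope_anti_adjacent (Set.mem_Ici.2 hx) (Set.mem_Ici.2 (by linarith : (0:ℝ) ≤ z))
    hxy hyz
  rw [← hc, div_le_iff₀ (by linarith)] at h3
  have hc2 : c * (z - y) = -(f y + 1) := by
    have hzy : z - y = (f y + 1) / (-c) := by rw [hz]; ring
    rw [hzy]
    rw [div_neg, mul_neg, neg_inj, mul_comm, div_mul_cancel₀ _ hcne]
  have hfz : 0 ≤ f z := hf0 z (by linarith)
  nlinarith

/-- Tangent-line lemma: there is an affine majorant `a + b x` (on a finite family of points)
with nonnegative coefficients that touches `f` at `t`. -/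
lemma concave_tangent {n : ℕ} (f : ℝ → ℝ) (hf : ConcaveOn ℝ (Set.Ici 0) f)
    (hf0 : ∀ x : ℝ, 0 ≤ x → 0 ≤ f x) (t : ℝ) (ht : 0 ≤ t) (lam : Fin n → ℝ)
    (hlam : ∀ i, 0 ≤ lam i) :
    ∃ a b : ℝ, 0 ≤ a ∧ 0 ≤ b ∧ a + b * t = f t ∧ ∀ i, f (lam i) ≤ a + b * lam i := by
  classical
  set g : Fin n → ℝ := fun i => if t < lam i then (f (lam i) - f t) / (lam i - t) else 0 with hg
  set T : Finset ℝ := insert 0 (Finset.image g Finset.univ) with hT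
  have hTne : T.Nonempty := ⟨0, Finset.mem_insert_self _ _⟩
  set b := T.max' hTne with hbdef
  have hb0 : 0 ≤ b := Finset.le_max' _ _ (Finset.mem_insert_self _ _)
  have hbg : ∀ i, g i ≤ b := fun i =>
    Finset.le_max' _ _ (Finset.mem_insert_of_mem (Finset.mem_image_of_mem g (Finset.mem_univ i)))
  have hbmem : b ∈ T := Finset.max'_mem T hTne
  refine ⟨f t - b * t, b, ?_, hb0, by ring, ?_⟩
  · -- 0 ≤ f t - b * t
    rcases Finset.mem_insert.1 hbmem with h0 | himg
    · rw [h0]; simpa using hf0 t ht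
    · obtain ⟨i, -, hgi⟩ := Finset.mem_image.1 himg
      by_cases hti : t < lam i
      · have hL : 0 < lam i := lt_of_le_of_lt ht hti
        have hμ0 : (0:ℝ) ≤ 1 - t / lam i := by
          rw [sub_nonneg, div_le_one hL]; exact hti.le
        have hμ1 : (0:ℝ) ≤ t / lam i := div_nonneg ht hL.le
        have hkey := hf.2 (Set.mem_Ici.2 (le_refl (0:ℝ))) (Set.mem_Ici.2 hL.le) hμ0 hμ1
          (by ring)
        rw [smul_eq_mul, smul_eq_mul, smul_eq_mul, smul_eq_mul, mul_zero, zero_add,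
          div_mul_cancel₀ _ hL.ne'] at hkey
        -- hkey : (1 - t/L) * f 0 + (t/L) * f L ≤ f t
        have hf00 : 0 ≤ f 0 := hf0 0 le_rfl
        have hkey2 : t / lam i * f (lam i) ≤ f t := by nlinarith
        have hkey3 : t * f (lam i) ≤ f t * lam i := by
          rw [div_mul_eq_mul_div, div_le_iff₀ hL] at hkey2
          linarith [hkey2]
        rw [← hgi]
        simp only [hg, if_pos hti]
        rw [sub_nonneg, div_mul_eq_mul_div, div_le_iff₀ (by linarith : (0:ℝ) < lam i - t)]
        nlinarith
      · rw [← hgi]; simp only [hg, if_neg hti, zero_mul, sub_zero]; exact hf0 t ht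
  · intro i
    rcases lt_trichotomy t (lam i) with h | h | h
    · have h1 : (f (lam i) - f t) / (lam i - t) ≤ b := by
        simpa only [hg, if_pos h] using hbg i
      rw [div_le_iff₀ (by linarith)] at h1
      have : b * (lam i - t) = b * lam i - b * t := by ring
      linarith
    · rw [← h]; linarith
    · have hm : b ≤ (f t - f (lam i)) / (t - lam i) := by
        apply Finset.max'_le
        intro y hy
        rcases Finset.mem_insert.1 hy with rfl | hy
        · exact div_nonneg (by linarith [concave_mono f hf hf0 (hlam i) h]) (by linarith)
        · obtain ⟨j, -, rfl⟩ := Finset.mem_image.1 hy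
          by_cases hj : t < lam j
          · have h3 := hf.slope_anti_adjacent (Set.mem_Ici.2 (hlam i))
              (Set.mem_Ici.2 (le_trans ht hj.le)) h hj
            simp only [hg, if_pos hj]
            exact h3
          · simp only [hg, if_neg hj]
            exact div_nonneg (by linarith [concave_mono f hf hf0 (hlam i) h]) (by linarith)
      rw [le_div_iff₀ (by linarith)] at hm
      have : b * (t - lam i) = b * t - b * lam i := by ring
      linarith

/-- Single-coordinate monotonicity for a unitarily invariant norm on diagonal matrices. -/
lemma diag_update_le {n : ℕ} (N : Matrix (Fin n) (Fin n) ℂ → ℝ)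
    (hN_add : ∀ P Q : Matrix (Fin n) (Fin n) ℂ, N (P + Q) ≤ N P + N Q)
    (hN_smul : ∀ (c : ℂ) (P : Matrix (Fin n) (Fin n) ℂ), N (c • P) = ‖c‖ * N P)
    (hN_unitary : ∀ U V P : Matrix (Fin n) (Fin n) ℂ,
      U ∈ Matrix.unitaryGroup (Fin n) ℂ → V ∈ Matrix.unitaryGroup (Fin n) ℂ →
      N (U * P * V) = N P)
    (v : Fin n → ℝ) (a : Fin n) (x : ℝ) (hx : 0 ≤ x) (hxc : x ≤ v a) :
    N (Matrix.diagonal fun i => ((Function.update v a x i : ℝ) : ℂ)) ≤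
      N (Matrix.diagonal fun i => ((v i : ℝ) : ℂ)) := by
  classical
  set c := v a with hc
  have hc0 : 0 ≤ c := le_trans hx hxc
  rcases eq_or_lt_of_le hc0 with hceq | hcpos
  · -- c = 0, so x = 0 and update is trivial
    have hx0 : x = 0 := le_antisymm (hceq ▸ hxc) hx
    have hva : v a = 0 := hceq.symm
    have : Function.update v a x = v := by
      funext i
      by_cases hia : i = a
      · subst hia; rw [Function.update_self, hx0, hva]
      · rw [Function.update_of_ne hia]
    rw [this]
  · -- c > 0
    set W : Matrix (Fin n) (Fin n) ℂ :=
      Matrix.diagonal (fun i => if i = a then (-1 : ℂ) else 1) with hWdef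
    have hWstar : star W = W := by
      rw [hWdef, Matrix.star_eq_conjTranspose, Matrix.diagonal_conjTranspose]
      rw [Matrix.diagonal_eq_diagonal_iff]
      intro i
      by_cases hia : i = a <;> simp [hia, Pi.star_apply]
    have hWmem : W ∈ Matrix.unitaryGroup (Fin n) ℂ := by
      rw [Matrix.mem_unitaryGroup_iff, hWstar, hWdef, Matrix.diagonal_mul_diagonal]
      have : (fun i => (if i = a then (-1:ℂ) else 1) * (if i = a then (-1:ℂ) else 1))
          = fun _ => (1:ℂ) := by
        funext i; by_cases hia : i = a <;> simp [hia]
      rw [this, Matrix.diagonal_one]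
    set t := (x + c) / (2 * c) with htdef
    have ht0 : 0 ≤ t := div_nonneg (by linarith) (by linarith)
    have ht1 : t ≤ 1 := by
      rw [htdef, div_le_one (by linarith)]; linarith
    have hdecomp : (Matrix.diagonal fun i => ((Function.update v a x i : ℝ) : ℂ)) =
        ((t : ℝ) : ℂ) • Matrix.diagonal (fun i => ((v i : ℝ) : ℂ)) +
          (((1 - t : ℝ) : ℂ)) • (W * Matrix.diagonal (fun i => ((v i : ℝ) : ℂ)) * 1) := by
      rw [mul_one, hWdef, Matrix.diagonal_mul_diagonal,
        ← Matrix.diagonal_smul, ← Matrix.diagonal_smul, Matrix.diagonal_add,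
        Matrix.diagonal_eq_diagonal_iff]
      intro i
      simp only [Pi.add_apply, Pi.smul_apply, smul_eq_mul]
      by_cases hia : i = a
      · subst hia
        rw [Function.update_self, if_pos rfl]
        have : (x : ℂ) = (t : ℂ) * (c : ℂ) + ((1 - t : ℝ) : ℂ) * (-1 * (c : ℂ)) := by
          have h2c : (2 : ℝ) * c ≠ 0 := by positivity
          have hr : x = t * c + (1 - t) * (-1 * c) := by rw [htdef]; field_simp; ring
          exact_mod_cast hr
        exact this
      · rw [Function.update_of_ne hia, if_neg hia]
        push_cast
        ring
    rw [hdecomp]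
    have hWN : N (W * Matrix.diagonal (fun i => ((v i : ℝ) : ℂ)) * 1) =
        N (Matrix.diagonal fun i => ((v i : ℝ) : ℂ)) :=
      hN_unitary W 1 _ hWmem (one_mem _)
    calc N _ ≤ N (((t : ℝ) : ℂ) • Matrix.diagonal (fun i => ((v i : ℝ) : ℂ))) +
          N ((((1 - t : ℝ) : ℂ)) • (W * Matrix.diagonal (fun i => ((v i : ℝ) : ℂ)) * 1)) :=
          hN_add _ _
      _ = t * N (Matrix.diagonal fun i => ((v i : ℝ) : ℂ)) +
          (1 - t) * N (Matrix.diagonal fun i => ((v i : ℝ) : ℂ)) := by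
          rw [hN_smul, hN_smul, hWN, Complex.norm_real, Complex.norm_real,
            Real.norm_eq_abs, Real.norm_eq_abs,
            abs_of_nonneg ht0, abs_of_nonneg (by linarith : (0:ℝ) ≤ 1 - t)]
      _ = N (Matrix.diagonal fun i => ((v i : ℝ) : ℂ)) := by ring

/-- Monotonicity of a unitarily invariant norm on nonnegative diagonal matrices. -/
lemma diag_mono {n : ℕ} (N : Matrix (Fin n) (Fin n) ℂ → ℝ)
    (hN_add : ∀ P Q : Matrix (Fin n) (Fin n) ℂ, N (P + Q) ≤ N P + N Q)
    (hN_smul : ∀ (c : ℂ) (P : Matrix (Fin n) (Fin n) ℂ), N (c • P) = ‖c‖ * N P)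
    (hN_unitary : ∀ U V P : Matrix (Fin n) (Fin n) ℂ,
      U ∈ Matrix.unitaryGroup (Fin n) ℂ → V ∈ Matrix.unitaryGroup (Fin n) ℂ →
      N (U * P * V) = N P)
    (d e : Fin n → ℝ) (hd : ∀ i, 0 ≤ d i) (hde : ∀ i, d i ≤ e i) :
    N (Matrix.diagonal fun i => ((d i : ℝ) : ℂ)) ≤
      N (Matrix.diagonal fun i => ((e i : ℝ) : ℂ)) := by
  classical
  have key : ∀ s : Finset (Fin n),
      N (Matrix.diagonal fun i => (((if i ∈ s then d i else e i) : ℝ) : ℂ)) ≤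
        N (Matrix.diagonal fun i => ((e i : ℝ) : ℂ)) := by
    intro s
    induction s using Finset.induction_on with
    | empty => simp
    | @insert a s ha ih =>
      have hupd : (fun i => if i ∈ insert a s then d i else e i) =
          Function.update (fun i => if i ∈ s then d i else e i) a (d a) := by
        funext i
        by_cases hia : i = a
        · subst hia
          rw [Function.update_self, if_pos (Finset.mem_insert_self _ _)]
        · rw [Function.update_of_ne hia]
          by_cases his : i ∈ s
          · rw [if_pos his, if_pos (Finset.mem_insert_of_mem his)]
          · rw [if_neg his, if_neg (by simp [hia, his])]
      have hupd2 : (fun i => (((if i ∈ insert a s then d i else e i) : ℝ) : ℂ)) =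
          fun i => ((Function.update (fun i => if i ∈ s then d i else e i) a (d a) i : ℝ) : ℂ) := by
        funext i; exact congrArg _ (congrFun hupd i)
      rw [hupd2]
      refine le_trans (diag_update_le N hN_add hN_smul hN_unitary _ a (d a) (hd a) ?_) ih
      simp only [if_neg ha]
      exact hde a
  have := key Finset.univ
  simpa using this

/-- Polar-type lemma: if `Bᴴ B = D²` with `D` a real diagonal, then `B = C D` for a unitary `C`. -/
lemma polar_aux {n : ℕ} (lam : Fin n → ℝ) (B : Matrix (Fin n) (Fin n) ℂ)
    (hB : B.conjTranspose * B = (Matrix.diagonal fun i => ((lam i : ℝ) : ℂ)) ^ 2) :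
    ∃ C ∈ Matrix.unitaryGroup (Fin n) ℂ,
      C * Matrix.diagonal (fun i => ((lam i : ℝ) : ℂ)) = B := by
  classical
  set col : Fin n → EuclideanSpace ℂ (Fin n) :=
    fun i => (WithLp.equiv 2 _).symm (fun k => B k i) with hcol
  have hinner : ∀ i j, (inner ℂ (col i) (col j) : ℂ) =
      if i = j then ((lam i : ℂ)) ^ 2 else 0 := by
    intro i j
    have h1 : (inner ℂ (col i) (col j) : ℂ) = ∑ k, (starRingEnd ℂ) (B k i) * B k j := by
      simp [hcol, PiLp.inner_apply, RCLike.inner_apply]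
      exact Finset.sum_congr rfl fun _ _ => mul_comm _ _
    have h2 : (B.conjTranspose * B) i j = ∑ k, (starRingEnd ℂ) (B k i) * B k j := by
      simp [Matrix.mul_apply, Matrix.conjTranspose_apply]
    have h3 : (B.conjTranspose * B) i j = if i = j then ((lam i : ℂ)) ^ 2 else 0 := by
      rw [hB, pow_two, Matrix.diagonal_mul_diagonal, Matrix.diagonal_apply]
      by_cases hij : i = j <;> simp [hij, pow_two]
    rw [h1, ← h2, h3]
  set v : Fin n → EuclideanSpace ℂ (Fin n) :=
    fun i => (((lam i)⁻¹ : ℝ) : ℂ) • col i with hv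
  have hortho : Orthonormal ℂ (Set.restrict {i | lam i ≠ 0} v) := by
    rw [orthonormal_iff_ite]
    rintro ⟨i, hi⟩ ⟨j, hj⟩
    simp only [Set.restrict_apply, hv]
    change inner ℂ ((((lam i)⁻¹ : ℝ) : ℂ) • col i) ((((lam j)⁻¹ : ℝ) : ℂ) • col j) = _
    rw [inner_smul_left, inner_smul_right, hinner]
    by_cases hij : i = j
    · subst hij
      simp only [if_pos rfl, Subtype.mk.injEq]
      rw [Complex.conj_ofReal]
      have hi' : (lam i : ℂ) ≠ 0 := by
        simpa using hi
      push_cast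
      field_simp
    · have : (⟨i, hi⟩ : {i | lam i ≠ 0}) ≠ ⟨j, hj⟩ := by simp [hij]
      simp [hij, this]
  have hcard : Module.finrank ℂ (EuclideanSpace ℂ (Fin n)) = Fintype.card (Fin n) := by
    simp
  obtain ⟨β, hβ⟩ := hortho.exists_orthonormalBasis_extension_of_card_eq hcard
  refine ⟨Matrix.of (fun k i => β i k), ?_, ?_⟩
  · rw [Matrix.mem_unitaryGroup_iff']
    ext i j
    rw [Matrix.mul_apply, Matrix.one_apply]
    have horth := β.orthonormal
    rw [orthonormal_iff_ite] at horth
    have := horth i j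
    rw [← this]
    simp [PiLp.inner_apply, RCLike.inner_apply, Matrix.star_apply, Matrix.of_apply]
    exact Finset.sum_congr rfl fun _ _ => mul_comm _ _
  · ext k j
    rw [Matrix.mul_diagonal]
    by_cases hj : lam j = 0
    · have hcol0 : col j = 0 := by
        rw [← inner_self_eq_zero (𝕜 := ℂ)]
        rw [hinner]
        simp [hj]
      have : B k j = 0 := by
        have := congrFun (congrArg (WithLp.equiv 2 (Fin n → ℂ)) hcol0) k
        simpa [hcol] using this
      simp [hj, this]
    · have hβj : β j = v j := hβ j hj
      have : (Matrix.of (fun k i => β i k)) k j = (((lam j)⁻¹ : ℝ) : ℂ) * B k j := by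
        rw [Matrix.of_apply, hβj, hv]
        simp [hcol]
      rw [this]
      have hj' : (lam j : ℂ) ≠ 0 := by simpa using hj
      push_cast
      field_simp

/-- The positive semidefinite square root of a positive semidefinite matrix -/
noncomputable def Matrix.PosSemidef.sqrt {𝕜 : Type*} [RCLike 𝕜] {n : Type*} [Fintype n]
    [DecidableEq n] {A : Matrix n n 𝕜} (hA : Matrix.PosSemidef A) : Matrix n n 𝕜 :=
  hA.1.eigenvectorUnitary.1 * Matrix.diagonal ((↑) ∘ (Real.sqrt ∘ hA.1.eigenvalues)) *
  (star hA.1.eigenvectorUnitary : Matrix n n 𝕜)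

lemma sqrt_posSemidef_aux {n : ℕ} {A : Matrix (Fin n) (Fin n) ℂ} (hA : Matrix.PosSemidef A) :
    hA.sqrt.PosSemidef := by
  unfold Matrix.PosSemidef.sqrt
  have h := (Matrix.posSemidef_diagonal_iff (d := ((↑) ∘ (Real.sqrt ∘ hA.1.eigenvalues) :
    Fin n → ℂ))).2 (fun i => by simp [Function.comp_apply, Real.sqrt_nonneg])
  have := h.mul_mul_conjTranspose_same (hA.1.eigenvectorUnitary : Matrix (Fin n) (Fin n) ℂ)
  simpa [Matrix.star_eq_conjTranspose] using this

lemma sqrt_sq_aux {n : ℕ} {A : Matrix (Fin n) (Fin n) ℂ} (hA : Matrix.PosSemidef A) :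
    hA.sqrt ^ 2 = A := by
  let C : Matrix (Fin n) (Fin n) ℂ := hA.1.eigenvectorUnitary
  let E := Matrix.diagonal ((↑) ∘ Real.sqrt ∘ hA.1.eigenvalues : Fin n → ℂ)
  suffices C * (E * (star C * C) * E) * star C = A by
    rw [pow_two]
    change C * E * star C * (C * E * star C) = A
    simpa only [← mul_assoc] using this
  have : star C * C = 1 := by simp only [C, Unitary.coe_star_mul_self]
  rw [this, mul_one]
  have : E * E = Matrix.diagonal ((↑) ∘ hA.1.eigenvalues) := by
    rw [Matrix.diagonal_mul_diagonal]
    congr! with v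
    simp [← pow_two, ← Complex.ofReal_pow, Real.sq_sqrt (hA.eigenvalues_nonneg v)]
  rw [this]
  conv_rhs => rw [hA.1.spectral_theorem]
  simp [C, Unitary.conjStarAlgAut_apply, mul_assoc]


/-- For a unitarily-invariant norm `N` on `Mₙ(ℂ)`, `Y ∈ Mₙ(ℂ)`, and `f : [0,∞) → [0,∞)`
concave: `N(f(|Y|)) ≤ N(I) · f(N(Y)/N(I))`, where `|Y| = (Y*Y)^{1/2}`. -/
theorem statement_3 {n : ℕ} (hn : 0 < n)
(N : Matrix (Fin n) (Fin n) ℂ → ℝ)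
    (hN_add : ∀ P Q : Matrix (Fin n) (Fin n) ℂ, N (P + Q) ≤ N P + N Q)
    (hN_smul : ∀ (c : ℂ) (P : Matrix (Fin n) (Fin n) ℂ), N (c • P) = ‖c‖ * N P)
    (hN_defn : ∀ P : Matrix (Fin n) (Fin n) ℂ, N P = 0 ↔ P = 0)
    (hN_unitary : ∀ U V P : Matrix (Fin n) (Fin n) ℂ,
      U ∈ Matrix.unitaryGroup (Fin n) ℂ → V ∈ Matrix.unitaryGroup (Fin n) ℂ →
      N (U * P * V) = N P)
    (hN_mul : ∀ P Q R : Matrix (Fin n) (Fin n) ℂ, N (P * Q * R) ≤ ‖P‖ * N Q * ‖R‖)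
    (Y : Matrix (Fin n) (Fin n) ℂ) (f : ℝ → ℝ)
    (hf_concave : ConcaveOn ℝ (Set.Ici 0) f)
    (hf_nonneg : ∀ x : ℝ, 0 ≤ x → 0 ≤ f x) :
    N (cfc f (Matrix.posSemidef_conjTranspose_mul_self Y).sqrt) ≤
      N 1 * f (N Y / N 1) := by
  classical
  have hA : (Matrix.posSemidef_conjTranspose_mul_self Y).sqrt.PosSemidef :=
    sqrt_posSemidef_aux _
  set A := (Matrix.posSemidef_conjTranspose_mul_self Y).sqrt with hAdef
  have hH : A.IsHermitian := hA.1
  set lam := hH.eigenvalues with hlamdef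
  have hlam : ∀ i, 0 ≤ lam i := fun i => hA.eigenvalues_nonneg i
  set W : Matrix (Fin n) (Fin n) ℂ := (hH.eigenvectorUnitary : Matrix (Fin n) (Fin n) ℂ) with hWdef
  have hWmem : W ∈ Matrix.unitaryGroup (Fin n) ℂ := SetLike.coe_mem _
  have hWW : W * star W = 1 := Matrix.mem_unitaryGroup_iff.1 hWmem
  have hWW' : star W * W = 1 := Matrix.mem_unitaryGroup_iff'.1 hWmem
  have hWstarmem : star W ∈ Matrix.unitaryGroup (Fin n) ℂ := Unitary.star_mem hWmem
  set D := Matrix.diagonal (fun i => ((lam i : ℝ) : ℂ)) with hDdef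
  have hspec : A = W * D * star W := hH.spectral_theorem
  -- basic properties of N
  have hN0 : N 0 = 0 := (hN_defn 0).2 rfl
  have hNneg : ∀ P, N (-P) = N P := by
    intro P
    have := hN_smul (-1) P
    simpa using this
  have hNnonneg : ∀ P, 0 ≤ N P := by
    intro P
    have h1 := hN_add P (-P)
    rw [add_neg_cancel, hN0, hNneg] at h1
    linarith
  have h1ne : (1 : Matrix (Fin n) (Fin n) ℂ) ≠ 0 := by
    intro h
    have := congrFun (congrFun h ⟨0, hn⟩) ⟨0, hn⟩
    simp [Matrix.one_apply] at this
  have hN1pos : 0 < N 1 :=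
    lt_of_le_of_ne (hNnonneg 1) (fun h => h1ne ((hN_defn 1).1 h.symm))
  -- polar decomposition
  have hA2 : A ^ 2 = W * (D * D) * star W := by
    rw [hspec, pow_two]
    calc W * D * star W * (W * D * star W)
        = W * (D * (star W * W * (D * star W))) := by simp only [Matrix.mul_assoc]
      _ = W * (D * (D * star W)) := by rw [hWW', Matrix.one_mul]
      _ = W * (D * D) * star W := by simp only [Matrix.mul_assoc]
  have hsq : A ^ 2 = Y.conjTranspose * Y :=
    sqrt_sq_aux (Matrix.posSemidef_conjTranspose_mul_self Y)
  have hBB : (Y * W).conjTranspose * (Y * W) = D ^ 2 := by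
    rw [Matrix.conjTranspose_mul]
    have e1 : star W * A ^ 2 * W = D * D := by
      rw [hA2]
      calc star W * (W * (D * D) * star W) * W
          = star W * W * (D * D) * (star W * W) := by simp only [Matrix.mul_assoc]
        _ = D * D := by rw [hWW', Matrix.one_mul, Matrix.mul_one]
    rw [hsq] at e1
    calc W.conjTranspose * Y.conjTranspose * (Y * W)
        = star W * (Y.conjTranspose * Y) * W := by
          simp only [Matrix.star_eq_conjTranspose, Matrix.mul_assoc]
      _ = D * D := e1
      _ = D ^ 2 := (pow_two D).symm
  obtain ⟨C, hCmem, hCD⟩ := polar_aux lam (Y * W) hBB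
  have hYeq : Y = C * D * star W := by
    have h2 : Y * W * star W = C * D * star W := by rw [hCD]
    rwa [Matrix.mul_assoc, hWW, Matrix.mul_one] at h2
  have hNY : N Y = N D := by
    rw [hYeq]
    exact hN_unitary C (star W) D hCmem hWstarmem
  -- the functional calculus as a diagonal
  have hcfc : cfc f A = W * Matrix.diagonal (fun i => ((f (lam i) : ℝ) : ℂ)) * star W := by
    rw [Matrix.IsHermitian.cfc_eq hH]
    rfl
  have hNf : N (cfc f A) = N (Matrix.diagonal fun i => ((f (lam i) : ℝ) : ℂ)) := by
    rw [hcfc]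
    exact hN_unitary W (star W) _ hWmem hWstarmem
  -- tangent line
  obtain ⟨a, b, ha, hb, habt, hab⟩ := concave_tangent f hf_concave hf_nonneg (N Y / N 1)
    (div_nonneg (hNnonneg Y) hN1pos.le) lam hlam
  have hmono := diag_mono N hN_add hN_smul hN_unitary (fun i => f (lam i))
    (fun i => a + b * lam i) (fun i => hf_nonneg _ (hlam i)) hab
  have hsplit : (Matrix.diagonal fun i => (((a + b * lam i : ℝ)) : ℂ)) =
      ((a : ℝ) : ℂ) • (1 : Matrix (Fin n) (Fin n) ℂ) + ((b : ℝ) : ℂ) • D := by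
    rw [hDdef, ← Matrix.diagonal_one, ← Matrix.diagonal_smul, ← Matrix.diagonal_smul,
      Matrix.diagonal_add, Matrix.diagonal_eq_diagonal_iff]
    intro i
    simp only [Pi.add_apply, Pi.smul_apply, smul_eq_mul]
    push_cast
    ring
  have hfinal : N (Matrix.diagonal fun i => (((a + b * lam i : ℝ)) : ℂ)) ≤
      a * N 1 + b * N D := by
    rw [hsplit]
    refine le_trans (hN_add _ _) ?_
    rw [hN_smul, hN_smul, Complex.norm_real, Complex.norm_real, Real.norm_eq_abs,
      Real.norm_eq_abs, abs_of_nonneg ha, abs_of_nonneg hb]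
  have hNYt : N Y = (N Y / N 1) * N 1 := by field_simp
  calc N (cfc f A) = N (Matrix.diagonal fun i => ((f (lam i) : ℝ) : ℂ)) := hNf
    _ ≤ N (Matrix.diagonal fun i => (((a + b * lam i : ℝ)) : ℂ)) := hmono
    _ ≤ a * N 1 + b * N D := hfinal
    _ = a * N 1 + b * N Y := by rw [hNY]
    _ = N 1 * (a + b * (N Y / N 1)) := by
        have hne : N 1 ≠ 0 := hN1pos.ne'
        field_simp
    _ = N 1 * f (N Y / N 1) := by rw [habt]
end

section
/- Let N be a unitarily-invariant norm on M_n(ℂ), let X ∈ M_n(ℂ) be Hermitian, let Y ∈ M_n(ℂ), and let k ∈ ℝ. Then N(e^{ikX}Y − Y e^{ikX}) ≤ |k| · N(XY − YX), where e^{ikX} denotes the matrix exponential of ikX. -/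
open scoped ComplexOrder Matrix.Norms.L2Operator

open NormedSpace Filter Matrix Topology

/-- For a unitarily-invariant norm `N` on `Mₙ(ℂ)`, `X` Hermitian, `Y`, and `k ∈ ℝ`:
`N(e^{ikX}Y − Ye^{ikX}) ≤ |k| · N(XY − YX)`. -/
theorem statement_8 {n : ℕ} (hn : 0 < n)
(N : Matrix (Fin n) (Fin n) ℂ → ℝ)
    (hN_add : ∀ P Q : Matrix (Fin n) (Fin n) ℂ, N (P + Q) ≤ N P + N Q)
    (hN_smul : ∀ (c : ℂ) (P : Matrix (Fin n) (Fin n) ℂ), N (c • P) = ‖c‖ * N P)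
    (hN_defn : ∀ P : Matrix (Fin n) (Fin n) ℂ, N P = 0 ↔ P = 0)
    (hN_unitary : ∀ U V P : Matrix (Fin n) (Fin n) ℂ,
      U ∈ Matrix.unitaryGroup (Fin n) ℂ → V ∈ Matrix.unitaryGroup (Fin n) ℂ →
      N (U * P * V) = N P)
    (hN_mul : ∀ P Q R : Matrix (Fin n) (Fin n) ℂ, N (P * Q * R) ≤ ‖P‖ * N Q * ‖R‖)
    (X Y : Matrix (Fin n) (Fin n) ℂ) (hX : X.IsHermitian) (k : ℝ) :
    N (NormedSpace.exp ((Complex.I * (k : ℂ)) • X) * Y -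
        Y * NormedSpace.exp ((Complex.I * (k : ℂ)) • X)) ≤
      |k| * N (X * Y - Y * X) := by
  classical
  have hN0 : N 0 = 0 := (hN_defn 0).2 rfl
  have hNneg : ∀ P, N (-P) = N P := by
    intro P
    have := hN_smul (-1) P
    simpa using this
  have hNnonneg : ∀ P, 0 ≤ N P := by
    intro P
    have h := hN_add P (-P)
    rw [add_neg_cancel, hN0, hNneg] at h
    linarith
  -- real scalar homogeneity
  have hN_rsmul : ∀ (r : ℝ) (P : Matrix (Fin n) (Fin n) ℂ), N (r • P) = |r| * N P := by
    intro r P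
    have : (r : ℝ) • P = ((r : ℂ)) • P := by
      ext i j
      simp [Matrix.smul_apply, Complex.real_smul]
    rw [this, hN_smul]
    simp
  rcases eq_or_ne k 0 with hk | hk
  · subst hk
    simp [hN0]
  -- main case
  set B : Matrix (Fin n) (Fin n) ℂ := Complex.I • X with hB
  have hrw : (Complex.I * (k : ℂ)) • X = (k : ℝ) • B := by
    ext i j
    simp [hB, Matrix.smul_apply, Complex.real_smul]
    ring
  -- continuity-type lemma for N
  have hstdsmul : ∀ (i j : Fin n) (c : ℂ), Matrix.single i j c = c • Matrix.single i j 1 := by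
    intro i j c
    rw [smul_single, smul_eq_mul, mul_one]
  have hNbound : ∀ P : Matrix (Fin n) (Fin n) ℂ,
      N P ≤ ∑ i : Fin n, ∑ j : Fin n, ‖P i j‖ * N (Matrix.single i j 1) := by
    intro P
    calc N P = N (∑ i : Fin n, ∑ j : Fin n, Matrix.single i j (P i j)) := by
            rw [← matrix_eq_sum_single P]
      _ ≤ ∑ i : Fin n, N (∑ j : Fin n, Matrix.single i j (P i j)) :=
            Finset.le_sum_of_subadditive N hN0.le hN_add _ _
      _ ≤ ∑ i : Fin n, ∑ j : Fin n, N (Matrix.single i j (P i j)) :=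
            Finset.sum_le_sum fun i _ => Finset.le_sum_of_subadditive N hN0.le hN_add _ _
      _ = ∑ i : Fin n, ∑ j : Fin n, ‖P i j‖ * N (Matrix.single i j 1) :=
            Finset.sum_congr rfl fun i _ => Finset.sum_congr rfl fun j _ => by
              rw [hstdsmul, hN_smul]
  have hNcont : ∀ (f : ℕ → Matrix (Fin n) (Fin n) ℂ) (L),
      Tendsto f atTop (𝓝 L) → Tendsto (fun m => N (f m)) atTop (𝓝 (N L)) := by
    intro f L hf
    have h0 : Tendsto (fun m => N (f m - L)) atTop (𝓝 0) := by
      have hsum : Tendsto (fun m => ∑ i : Fin n, ∑ j : Fin n,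
          ‖(f m - L) i j‖ * N (Matrix.single i j 1)) atTop (𝓝 0) := by
        have hfl : Tendsto (fun m => f m - L) atTop (𝓝 0) := by
          simpa using hf.sub (tendsto_const_nhds (x := L))
        have hentry : ∀ i j : Fin n,
            Tendsto (fun m => ‖(f m - L) i j‖ * N (Matrix.single i j 1))
              atTop (𝓝 0) := by
          intro i j
          have h1 : Tendsto (fun m => (f m - L) i j) atTop (𝓝 0) := by
            have hc : Continuous fun M : Matrix (Fin n) (Fin n) ℂ => M i j :=
              (continuous_apply j).comp (continuous_apply i)
            simpa [Function.comp_def] using (hc.tendsto 0).comp hfl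
          have := (h1.norm).mul_const (N (Matrix.single i j 1))
          simpa using this
        have := tendsto_finset_sum (Finset.univ (α := Fin n))
          (fun i _ => tendsto_finset_sum Finset.univ (fun j _ => hentry i j))
        simpa using this
      refine squeeze_zero (fun m => hNnonneg _) (fun m => hNbound _) hsum
    have habs : ∀ m, |N (f m) - N L| ≤ N (f m - L) := by
      intro m
      rw [abs_sub_le_iff]
      constructor
      · have h := hN_add (f m - L) L
        simpa using h
      · have h := hN_add (L - f m) (f m)
        rw [sub_add_cancel] at h
        have : N (L - f m) = N (f m - L) := by
          rw [← hNneg (f m - L)]; congr 1; abel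
        linarith [this ▸ h]
    have : Tendsto (fun m => N (f m) - N L) atTop (𝓝 0) :=
      squeeze_zero_norm habs h0
    simpa using this.add_const (N L)
  -- skew-adjointness and unitarity
  have hBH : star B = -B := by
    rw [hB, Matrix.star_eq_conjTranspose, Matrix.conjTranspose_smul, hX.eq,
      Complex.star_def, Complex.conj_I, neg_smul]
  have hskew : ∀ t : ℝ, (t • B) ∈ skewAdjoint (Matrix (Fin n) (Fin n) ℂ) := by
    intro t
    rw [skewAdjoint.mem_iff, star_smul, star_trivial, hBH, smul_neg]
  have hunit : ∀ t : ℝ, exp (t • B) ∈ Matrix.unitaryGroup (Fin n) ℂ := fun t =>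
    letI : NormedAlgebra ℚ (Matrix (Fin n) (Fin n) ℂ) := NormedAlgebra.restrictScalars ℚ ℂ _
    exp_mem_unitary_of_mem_skewAdjoint (hskew t)
  -- telescoping bound
  have htel : ∀ (A : Matrix (Fin n) (Fin n) ℂ), A ∈ Matrix.unitaryGroup (Fin n) ℂ →
      ∀ m : ℕ, N (A ^ m * Y - Y * A ^ m) ≤ m * N (A * Y - Y * A) := by
    intro A hA m
    induction m with
    | zero => simp [hN0]
    | succ m ih =>
      have hid : A ^ (m + 1) * Y - Y * A ^ (m + 1) =
          A * (A ^ m * Y - Y * A ^ m) * 1 + 1 * (A * Y - Y * A) * A ^ m := by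
        rw [pow_succ']
        noncomm_ring
      calc N (A ^ (m + 1) * Y - Y * A ^ (m + 1))
          ≤ N (A * (A ^ m * Y - Y * A ^ m) * 1) + N (1 * (A * Y - Y * A) * A ^ m) := by
            rw [hid]; exact hN_add _ _
        _ = N (A ^ m * Y - Y * A ^ m) + N (A * Y - Y * A) := by
            rw [hN_unitary _ _ _ hA (Submonoid.one_mem _),
              hN_unitary _ _ _ (Submonoid.one_mem _) (pow_mem hA m)]
        _ ≤ m * N (A * Y - Y * A) + N (A * Y - Y * A) := by linarith
        _ = (m + 1 : ℕ) * N (A * Y - Y * A) := by push_cast; ring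
  -- the function g and its derivative
  set g : ℝ → Matrix (Fin n) (Fin n) ℂ :=
    fun t => exp (t • B) * Y - Y * exp (t • B) with hg
  have hg0 : g 0 = 0 := by simp [hg, exp_zero]
  have hD : HasDerivAt g (B * Y - Y * B) 0 := by
    have h1 : HasDerivAt (fun t : ℝ => exp (t • B)) (exp ((0 : ℝ) • B) * B) 0 :=
      hasDerivAt_exp_smul_const B 0
    have h1' : HasDerivAt (fun t : ℝ => exp (t • B)) B 0 := by
      simpa [exp_zero] using h1
    exact (h1'.mul_const Y).sub (h1'.const_mul Y)
  have hslope : Tendsto (slope g 0) (𝓝[≠] 0) (𝓝 (B * Y - Y * B)) :=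
    hasDerivAt_iff_tendsto_slope.mp hD
  -- the sequence
  have hseq : Tendsto (fun m : ℕ => k / (m + 1)) atTop (𝓝[≠] 0) := by
    apply tendsto_nhdsWithin_of_tendsto_nhds_of_eventually_within
    · have h := (tendsto_const_div_atTop_nhds_zero_nat k).comp (tendsto_add_atTop_nat 1)
      refine h.congr fun m => ?_
      simp only [Function.comp]
      push_cast
      ring
    · filter_upwards with m
      have hm : ((m : ℝ) + 1) ≠ 0 := by positivity
      exact Set.mem_compl_singleton_iff.mpr (div_ne_zero hk hm)
  have hslopeseq : Tendsto (fun m : ℕ => N (slope g 0 (k / (m + 1)))) atTop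
      (𝓝 (N (B * Y - Y * B))) :=
    hNcont _ _ (hslope.comp hseq)
  have hND : N (B * Y - Y * B) = N (X * Y - Y * X) := by
    have : B * Y - Y * B = Complex.I • (X * Y - Y * X) := by
      rw [hB, smul_sub, smul_mul_assoc, mul_smul_comm]
    rw [this, hN_smul]
    simp
  -- the per-m inequality
  have hmain : ∀ m : ℕ,
      N (exp ((Complex.I * (k : ℂ)) • X) * Y - Y * exp ((Complex.I * (k : ℂ)) • X)) ≤
        |k| * N (slope g 0 (k / (m + 1))) := by
    intro m
    have hm1 : ((m : ℝ) + 1) ≠ 0 := by positivity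
    set t : ℝ := k / (m + 1) with ht
    have hexpeq : exp ((Complex.I * (k : ℂ)) • X) = exp (t • B) ^ (m + 1) := by
      rw [hrw, ← Matrix.exp_nsmul]
      congr 1
      rw [← Nat.cast_smul_eq_nsmul ℝ, smul_smul, ht]
      congr 1
      push_cast
      field_simp
    have hstep : N (exp ((Complex.I * (k : ℂ)) • X) * Y -
        Y * exp ((Complex.I * (k : ℂ)) • X)) ≤ (m + 1 : ℕ) * N (g t) := by
      rw [hexpeq]
      exact htel _ (hunit t) (m + 1)
    have hslope_val : N (slope g 0 t) = |t|⁻¹ * N (g t) := by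
      have : slope g 0 t = t⁻¹ • g t := by
        simp [slope_def_module, hg0]
      rw [this, hN_rsmul, abs_inv]
    have ht0 : t ≠ 0 := div_ne_zero hk hm1
    have habs_t : |t| = |k| / (m + 1) := by
      rw [ht, abs_div]
      congr 1
      rw [abs_of_pos]; positivity
    have hk0 : (0:ℝ) < |k| := abs_pos.mpr hk
    have : |k| * N (slope g 0 t) = (m + 1 : ℕ) * N (g t) := by
      rw [hslope_val, habs_t]
      field_simp
      push_cast; ring
    rw [this]
    exact hstep
  have htend : Tendsto (fun m : ℕ => |k| * N (slope g 0 (k / (m + 1)))) atTop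
      (𝓝 (|k| * N (X * Y - Y * X))) := by
    rw [← hND]
    exact hslopeseq.const_mul |k|
  exact ge_of_tendsto' htend hmain
end

section
/- Let f₁(x) = x/(x+1), let N be a unitarily-invariant norm on M_n(ℂ), and fix c > 0 and C ≥ 1. Suppose that N(f₁(A)X − Xf₁(A)) ≤ C · f₁(c) for all A, X ∈ M_n(ℂ) with A positive semidefinite, N(X) ≤ 1, and N(AX − XA) = c. Then for every d > c and all A, X ∈ M_n(ℂ) with A positive semidefinite, N(X) ≤ 1, and N(AX − XA) = d: N(f₁(A)X − Xf₁(A)) ≤ C · ((d+1)/(c+1)) · f₁(d). -/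
open scoped ComplexOrder Matrix.Norms.L2Operator

noncomputable instance matrixCStarAlgebra {n : ℕ} : CStarAlgebra (Matrix (Fin n) (Fin n) ℂ) := Matrix.instCStarAlgebra

private lemma contOn_of_finite (f : ℝ → ℝ) {s : Set ℝ} (hs : s.Finite) :
    ContinuousOn f s := by
  have : Finite s := hs.to_subtype
  have : DiscreteTopology s := Finite.instDiscreteTopology
  rw [continuousOn_iff_continuous_restrict]
  exact continuous_of_discreteTopology

private lemma contOn_spectrum {n : ℕ} (f : ℝ → ℝ) (A : Matrix (Fin n) (Fin n) ℂ) :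
    ContinuousOn f (spectrum ℝ A) :=
  contOn_of_finite f (Matrix.finite_real_spectrum (A := A))

private lemma spectrum_nonneg' {n : ℕ} {A : Matrix (Fin n) (Fin n) ℂ} (hA : A.PosSemidef) :
    ∀ x ∈ spectrum ℝ A, 0 ≤ x := by
  intro x hx
  obtain ⟨i, rfl⟩ := Matrix.IsHermitian.spectrum_real_eq_range_eigenvalues hA.1 ▸ hx
  exact hA.eigenvalues_nonneg i

private lemma cfc_mul_eq {n : ℕ} {A : Matrix (Fin n) (Fin n) ℂ} (hA : A.PosSemidef)
    (u v w : ℝ → ℝ) (h : ∀ x ∈ spectrum ℝ A, u x * v x = w x) :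
    cfc u A * cfc v A = cfc w A := by
  rw [← cfc_mul u v A (contOn_spectrum _ _) (contOn_spectrum _ _)]
  exact cfc_congr h

/-- The key algebraic identity: the commutator of `f₁(A)` with `X` is
`(A+1)⁻¹ (AX - XA) (A+1)⁻¹`. -/
private lemma comm_eq {n : ℕ} (A X : Matrix (Fin n) (Fin n) ℂ) (hA : A.PosSemidef) :
    cfc (fun t : ℝ => t / (t + 1)) A * X - X * cfc (fun t : ℝ => t / (t + 1)) A
      = cfc (fun t : ℝ => (t + 1)⁻¹) A * (A * X - X * A) * cfc (fun t : ℝ => (t + 1)⁻¹) A := by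
  have hAs : IsSelfAdjoint A := hA.1
  have hsp := spectrum_nonneg' hA
  set g : ℝ → ℝ := fun t => (t + 1)⁻¹ with hg
  set E := cfc g A with hE
  have hA1 : cfc (fun t : ℝ => t + 1) A = A + 1 := by
    rw [cfc_add (a := A) (fun t : ℝ => t) (fun _ => 1) (contOn_spectrum _ _) (contOn_spectrum _ _),
      cfc_id' ℝ A, cfc_const_one ℝ A]
  have hEB : E * (A + 1) = 1 := by
    rw [← hA1, hE, cfc_mul_eq hA g _ (fun _ => 1) ?_, cfc_const_one ℝ A]
    intro x hx
    have h1 : x + 1 ≠ 0 := by have := hsp x hx; positivity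
    simp only [hg]; field_simp
  have hBE : (A + 1) * E = 1 := by
    rw [← hA1, hE, cfc_mul_eq hA _ g (fun _ => 1) ?_, cfc_const_one ℝ A]
    intro x hx
    have h1 : x + 1 ≠ 0 := by have := hsp x hx; positivity
    simp only [hg]; field_simp
  have hEA : E * A = 1 - E := by
    have : E * (A + 1) = E * A + E := by noncomm_ring
    rw [this] at hEB
    linear_combination (norm := noncomm_ring) hEB
  have hAE : A * E = 1 - E := by
    have : (A + 1) * E = A * E + E := by noncomm_ring
    rw [this] at hBE
    linear_combination (norm := noncomm_ring) hBE
  have hf₁ : cfc (fun t : ℝ => t / (t + 1)) A = 1 - E := by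
    have h1 : cfc (fun t : ℝ => t / (t + 1)) A = cfc (fun t : ℝ => 1 - g t) A := by
      apply cfc_congr
      intro x hx
      have h1 : x + 1 ≠ 0 := by have := hsp x hx; positivity
      simp only [hg]; field_simp; ring
    rw [h1, cfc_sub (fun _ => 1) g A (contOn_spectrum _ _) (contOn_spectrum _ _),
      cfc_const_one ℝ A]
  rw [hf₁]
  calc (1 - E) * X - X * (1 - E) = X * E - E * X := by noncomm_ring
    _ = (E * A) * X * E - E * X * (A * E) + (E * X * E - E * X * E) := by
        rw [hEA, hAE]; noncomm_ring
    _ = E * (A * X - X * A) * E := by noncomm_ring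

/-- Let `f₁(x) = x/(x+1)`, `c > 0`, `C ≥ 1`. If `N(f₁(A)X − Xf₁(A)) ≤ C·f₁(c)` whenever
`A` is psd, `N(X) ≤ 1`, `N(AX − XA) = c`, then for every `d > c` and `A, X` with `A` psd,
`N(X) ≤ 1`, `N(AX − XA) = d`: `N(f₁(A)X − Xf₁(A)) ≤ C·((d+1)/(c+1))·f₁(d)`. -/
theorem statement_12 {n : ℕ} (hn : 0 < n)
(N : Matrix (Fin n) (Fin n) ℂ → ℝ)
    (hN_add : ∀ P Q : Matrix (Fin n) (Fin n) ℂ, N (P + Q) ≤ N P + N Q)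
    (hN_smul : ∀ (c : ℂ) (P : Matrix (Fin n) (Fin n) ℂ), N (c • P) = ‖c‖ * N P)
    (hN_defn : ∀ P : Matrix (Fin n) (Fin n) ℂ, N P = 0 ↔ P = 0)
    (hN_unitary : ∀ U V P : Matrix (Fin n) (Fin n) ℂ,
      U ∈ Matrix.unitaryGroup (Fin n) ℂ → V ∈ Matrix.unitaryGroup (Fin n) ℂ →
      N (U * P * V) = N P)
    (hN_mul : ∀ P Q R : Matrix (Fin n) (Fin n) ℂ, N (P * Q * R) ≤ ‖P‖ * N Q * ‖R‖)
    (c C : ℝ) (hc : 0 < c) (hC : 1 ≤ C)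
    (hyp : ∀ A X : Matrix (Fin n) (Fin n) ℂ, A.PosSemidef → N X ≤ 1 →
      N (A * X - X * A) = c →
      N (cfc (fun x : ℝ => x / (x + 1)) A * X - X * cfc (fun x : ℝ => x / (x + 1)) A) ≤
        C * (c / (c + 1))) :
    ∀ d : ℝ, c < d → ∀ A X : Matrix (Fin n) (Fin n) ℂ, A.PosSemidef → N X ≤ 1 →
      N (A * X - X * A) = d →
      N (cfc (fun x : ℝ => x / (x + 1)) A * X - X * cfc (fun x : ℝ => x / (x + 1)) A) ≤
        C * ((d + 1) / (c + 1)) * (d / (d + 1)) := by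
  intro d hd A X hA hX hAX
  have hd0 : 0 < d := hc.trans hd
  have hNnonneg : ∀ P : Matrix (Fin n) (Fin n) ℂ, 0 ≤ N P := by
    intro P
    have h1 := hN_add P (-P)
    have h2 : N (-P) = N P := by
      have := hN_smul (-1) P
      simpa using this
    have h3 : N 0 = 0 := (hN_defn 0).mpr rfl
    rw [add_neg_cancel, h3, h2] at h1
    linarith
  set r : ℝ := c / d with hr
  have hr0 : 0 < r := div_pos hc hd0
  have hr1 : r < 1 := (div_lt_one hd0).mpr hd
  have hAs : IsSelfAdjoint A := hA.1
  have hsp := spectrum_nonneg' hA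
  -- the scaled matrix
  set A' : Matrix (Fin n) (Fin n) ℂ := r • A with hA'def
  have hA'herm : A'.IsHermitian := IsSelfAdjoint.smul (isSelfAdjoint_iff.mpr (star_trivial r)) hAs
  have hA' : A'.PosSemidef := by
    exact hA.smul hr0.le
  -- commutator of A' with X
  have hcommA' : A' * X - X * A' = (r : ℂ) • (A * X - X * A) := by
    rw [hA'def]
    rw [smul_mul_assoc, mul_smul_comm, ← smul_sub]
    norm_num [Complex.coe_smul]
  have hNA' : N (A' * X - X * A') = c := by
    rw [hcommA', hN_smul, hAX]
    simp only [Complex.norm_real, Real.norm_eq_abs, abs_of_pos hr0]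
    rw [hr]
    field_simp
  have h1 := hyp A' X hA' hX hNA'
  -- functions
  set g : ℝ → ℝ := fun t => (t + 1)⁻¹ with hgdef
  set g' : ℝ → ℝ := fun t => (r * t + 1)⁻¹ with hg'def
  set m : ℝ → ℝ := fun t => (r * t + 1) / (t + 1) with hmdef
  set E : Matrix (Fin n) (Fin n) ℂ := cfc g A with hEdef
  set E' : Matrix (Fin n) (Fin n) ℂ := cfc g' A with hE'def
  set M : Matrix (Fin n) (Fin n) ℂ := cfc m A with hMdef
  -- cfc g A' = E'
  have hgA' : cfc g A' = E' := by
    rw [hA'def, ← cfc_comp_smul r g A (contOn_of_finite g ((Matrix.finite_real_spectrum (A := A)).image _)) hAs]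
    apply cfc_congr
    intro x _
    simp [hgdef, hg'def, smul_eq_mul]
  -- rewrite h1 using comm_eq
  rw [comm_eq A' X hA'] at h1
  rw [hgA', hcommA'] at h1
  set Z : Matrix (Fin n) (Fin n) ℂ := A * X - X * A with hZdef
  have hYsmul : E' * ((r : ℂ) • Z) * E' = (r : ℂ) • (E' * Z * E') := by
    rw [mul_smul_comm, smul_mul_assoc]
  rw [hYsmul, hN_smul] at h1
  have hnr : ‖(r : ℂ)‖ = r := by
    simp [Complex.norm_real, abs_of_pos hr0]
  rw [hnr] at h1
  set Y : Matrix (Fin n) (Fin n) ℂ := E' * Z * E' with hYdef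
  have hNY : N Y ≤ C * (c / (c + 1)) / r := by
    rw [le_div_iff₀ hr0]
    linarith [h1]
  -- M * E' = E and E' * M = E
  have haux : ∀ x ∈ spectrum ℝ A, m x * g' x = g x := by
    intro x hx
    have hx0 := hsp x hx
    have h1 : x + 1 ≠ 0 := by positivity
    have h2 : r * x + 1 ≠ 0 := by positivity
    simp only [hmdef, hg'def, hgdef]; field_simp
  have hME' : M * E' = E := cfc_mul_eq hA m g' g haux
  have hE'M : E' * M = E := cfc_mul_eq hA g' m g (fun x hx => by rw [mul_comm]; exact haux x hx)
  -- norm of M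
  have hMnorm : ‖M‖ ≤ 1 := by
    apply norm_cfc_le zero_le_one
    intro x hx
    have hx0 := hsp x hx
    rw [Real.norm_eq_abs, hmdef]
    rw [abs_div, abs_of_nonneg (by positivity), abs_of_nonneg (by positivity)]
    rw [div_le_one (by positivity)]
    nlinarith
  -- main identity
  have hmain : cfc (fun x : ℝ => x / (x + 1)) A * X - X * cfc (fun x : ℝ => x / (x + 1)) A
      = M * Y * M := by
    rw [comm_eq A X hA]
    rw [hYdef]
    calc E * (A * X - X * A) * E = (M * E') * Z * (E' * M) := by rw [hME', hE'M, hZdef]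
      _ = M * (E' * Z * E') * M := by noncomm_ring
  rw [hmain]
  have hfin : N (M * Y * M) ≤ N Y := by
    calc N (M * Y * M) ≤ ‖M‖ * N Y * ‖M‖ := hN_mul M Y M
      _ ≤ ‖M‖ * N Y := mul_le_of_le_one_right (mul_nonneg (norm_nonneg M) (hNnonneg Y)) hMnorm
      _ ≤ N Y := mul_le_of_le_one_left (hNnonneg Y) hMnorm
  have heq : C * (c / (c + 1)) / r = C * ((d + 1) / (c + 1)) * (d / (d + 1)) := by
    rw [hr]
    field_simp
  linarith [hNY, hfin]
end

section
/- Let f₁(x) = x/(x+1), let N be a unitarily-invariant norm on M_n(ℂ), let A ∈ M_n(ℂ) be positive semidefinite, let X ∈ M_n(ℂ) with N(X) ≤ 1, and set c = N(AX − XA). If c < 1/2 then N(f₁(A)X − Xf₁(A)) ≤ c, and if c ≥ 1/2 then N(f₁(A)X − Xf₁(A)) ≤ 1 − 1/(4c). -/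
open scoped ComplexOrder Matrix.Norms.L2Operator

private lemma myNormCfcLe {n : ℕ} (A : Matrix (Fin n) (Fin n) ℂ) (hA : IsSelfAdjoint A)
    {g : ℝ → ℝ} (hg : ContinuousOn g (spectrum ℝ A)) {r : ℝ} (hr : 0 ≤ r)
    (h : ∀ x ∈ spectrum ℝ A, |g x| ≤ r) : ‖cfc g A‖ ≤ r := by
  letI : CStarAlgebra (Matrix (Fin n) (Fin n) ℂ) := Matrix.instCStarAlgebra
  have hsa : IsSelfAdjoint (cfc g A) := cfc_predicate g A
  rw [← hsa.toReal_spectralRadius_eq_norm]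
  have hb : spectralRadius ℝ (cfc g A) ≤ ENNReal.ofReal r := by
    simp only [spectralRadius]
    refine iSup₂_le fun k hk => ?_
    rw [cfc_map_spectrum (R := ℝ) (f := g) (a := A) hA hg] at hk
    obtain ⟨x, hx, rfl⟩ := hk
    rw [← enorm_eq_nnnorm, Real.enorm_eq_ofReal_abs]
    exact ENNReal.ofReal_le_ofReal (h x hx)
  exact ENNReal.toReal_le_of_le_ofReal hr hb

private lemma myComm {n : ℕ} (A X : Matrix (Fin n) (Fin n) ℂ) (hA : IsSelfAdjoint A)
    (hs : ∀ x ∈ spectrum ℝ A, 0 ≤ x) {μ : ℝ} (hμ : 1 ≤ μ) :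
    cfc (fun x : ℝ => x / (x + μ)) A * X - X * cfc (fun x : ℝ => x / (x + μ)) A
      = cfc (fun x : ℝ => μ * (x + μ)⁻¹) A * (A * X - X * A)
          * cfc (fun x : ℝ => (x + μ)⁻¹) A := by
  have hden : ∀ x ∈ spectrum ℝ A, x + μ ≠ 0 := fun x hx => by
    have := hs x hx; intro h; linarith [h]
  have hcR : ContinuousOn (fun x : ℝ => (x + μ)⁻¹) (spectrum ℝ A) :=
    ((continuous_id'.add continuous_const).continuousOn).inv₀ hden
  have hid : ContinuousOn (fun x : ℝ => x) (spectrum ℝ A) :=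
    continuous_id'.continuousOn
  have hcS : ContinuousOn (fun x : ℝ => μ * (x + μ)⁻¹) (spectrum ℝ A) :=
    continuousOn_const.mul hcR
  set R := cfc (fun x : ℝ => (x + μ)⁻¹) A with hRdef
  set S := cfc (fun x : ℝ => μ * (x + μ)⁻¹) A with hSdef
  have hS : S = μ • R := by rw [hSdef, hRdef, cfc_const_mul μ _ A hcR]
  have hSA : S * A = μ • (1 : Matrix (Fin n) (Fin n) ℂ) - μ • S := by
    have h0 : cfc (fun x : ℝ => μ * (x + μ)⁻¹ * x) A = S * A := by
      rw [cfc_mul _ _ A hcS hid, cfc_id' ℝ A hA, ← hSdef]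
    rw [← h0]
    rw [cfc_congr (g := fun x : ℝ => μ - μ * (μ * (x + μ)⁻¹))
      (fun x hx => by have hne := hden x hx; field_simp; ring)]
    rw [cfc_sub (fun _ : ℝ => μ) (fun x : ℝ => μ * (μ * (x + μ)⁻¹)) A continuousOn_const (continuousOn_const.mul hcS),
      cfc_const μ A hA, cfc_const_mul μ _ A hcS, Algebra.algebraMap_eq_smul_one,
      ← hSdef]
  have hAR : A * R = 1 - S := by
    have h0 : cfc (fun x : ℝ => x * (x + μ)⁻¹) A = A * R := by
      rw [cfc_mul _ _ A hid hcR, cfc_id' ℝ A hA, ← hRdef]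
    rw [← h0]
    rw [cfc_congr (g := fun x : ℝ => 1 - μ * (x + μ)⁻¹)
      (fun x hx => by have hne := hden x hx; field_simp; ring)]
    rw [cfc_sub _ _ A continuousOn_const hcS, cfc_const_one ℝ A, ← hSdef]
  have hF : cfc (fun x : ℝ => x / (x + μ)) A = 1 - S := by
    rw [cfc_congr (g := fun x : ℝ => 1 - μ * (x + μ)⁻¹)
      (fun x hx => by have hne := hden x hx; field_simp; ring)]
    rw [cfc_sub _ _ A continuousOn_const hcS, cfc_const_one ℝ A, ← hSdef]
  rw [hF]
  have expand : S * (A * X - X * A) * R = (S * A) * (X * R) - (S * X) * (A * R) := by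
    noncomm_ring
  rw [expand, hSA, hAR, hS]
  simp only [sub_mul, mul_sub, one_mul, mul_one, smul_mul_assoc, mul_smul_comm,
    mul_assoc, smul_smul]
  abel

/-- Let `f₁(x) = x/(x+1)`, `A` psd, `N(X) ≤ 1`, `c = N(AX − XA)`. If `c < 1/2` then
`N(f₁(A)X − Xf₁(A)) ≤ c`; if `c ≥ 1/2` then `N(f₁(A)X − Xf₁(A)) ≤ 1 − 1/(4c)`. -/
theorem statement_13 {n : ℕ} (hn : 0 < n)
(N : Matrix (Fin n) (Fin n) ℂ → ℝ)
    (hN_add : ∀ P Q : Matrix (Fin n) (Fin n) ℂ, N (P + Q) ≤ N P + N Q)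
    (hN_smul : ∀ (c : ℂ) (P : Matrix (Fin n) (Fin n) ℂ), N (c • P) = ‖c‖ * N P)
    (hN_defn : ∀ P : Matrix (Fin n) (Fin n) ℂ, N P = 0 ↔ P = 0)
    (hN_unitary : ∀ U V P : Matrix (Fin n) (Fin n) ℂ,
      U ∈ Matrix.unitaryGroup (Fin n) ℂ → V ∈ Matrix.unitaryGroup (Fin n) ℂ →
      N (U * P * V) = N P)
    (hN_mul : ∀ P Q R : Matrix (Fin n) (Fin n) ℂ, N (P * Q * R) ≤ ‖P‖ * N Q * ‖R‖)
    (A X : Matrix (Fin n) (Fin n) ℂ) (hA : A.PosSemidef) (hX : N X ≤ 1) :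
    (N (A * X - X * A) < 1 / 2 →
      N (cfc (fun x : ℝ => x / (x + 1)) A * X - X * cfc (fun x : ℝ => x / (x + 1)) A) ≤
        N (A * X - X * A)) ∧
    (1 / 2 ≤ N (A * X - X * A) →
      N (cfc (fun x : ℝ => x / (x + 1)) A * X - X * cfc (fun x : ℝ => x / (x + 1)) A) ≤
        1 - 1 / (4 * N (A * X - X * A))) := by
  have hne : Nonempty (Fin n) := ⟨⟨0, hn⟩⟩
  have hA' : IsSelfAdjoint A := hA.1
  have hs : ∀ x ∈ spectrum ℝ A, 0 ≤ x := by
    intro x hx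
    rw [(show A.IsHermitian from hA.1).spectrum_real_eq_range_eigenvalues] at hx
    obtain ⟨i, rfl⟩ := hx
    exact hA.eigenvalues_nonneg i
  -- basic norm facts
  have hN0 : N 0 = 0 := (hN_defn 0).mpr rfl
  have hNneg : ∀ P, N (-P) = N P := fun P => by
    simpa using hN_smul (-1) P
  have hNnn : ∀ P, 0 ≤ N P := fun P => by
    have h1 := hN_add P (-P)
    rw [add_neg_cancel, hN0, hNneg] at h1
    linarith
  have hsub : ∀ P Q, N (P - Q) ≤ N P + N Q := fun P Q => by
    have := hN_add P (-Q)
    rw [← sub_eq_add_neg, hNneg] at this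
    exact this
  have hnorm1 : ‖(1 : Matrix (Fin n) (Fin n) ℂ)‖ = 1 := norm_one
  set c := N (A * X - X * A) with hcdef
  -- the key uniform bound
  have hbound : ∀ μ : ℝ, 1 ≤ μ →
      N (cfc (fun x : ℝ => x / (x + μ)) A * X - X * cfc (fun x : ℝ => x / (x + μ)) A)
        ≤ c * μ⁻¹ := by
    intro μ hμ
    rw [myComm A X hA' hs hμ]
    have hμ0 : (0:ℝ) < μ := by linarith
    have h1 : ‖cfc (fun x : ℝ => μ * (x + μ)⁻¹) A‖ ≤ 1 := by
      refine myNormCfcLe A hA' ?_ zero_le_one ?_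
      · exact continuousOn_const.mul
          (((continuous_id'.add continuous_const).continuousOn).inv₀
            (fun x hx => by have := hs x hx; intro h; linarith [show x + μ = 0 from h]))
      · intro x hx
        have hx0 := hs x hx
        have hxμ : (0:ℝ) < x + μ := by linarith
        rw [abs_of_nonneg (by positivity)]
        rw [← div_eq_mul_inv, div_le_one hxμ]
        linarith
    have h2 : ‖cfc (fun x : ℝ => (x + μ)⁻¹) A‖ ≤ μ⁻¹ := by
      refine myNormCfcLe A hA' ?_ (by positivity) ?_
      · exact ((continuous_id'.add continuous_const).continuousOn).inv₀
          (fun x hx => by have := hs x hx; intro h; linarith [show x + μ = 0 from h])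
      · intro x hx
        have hx0 := hs x hx
        have hxμ : (0:ℝ) < x + μ := by linarith
        rw [abs_of_nonneg (by positivity)]
        exact inv_anti₀ hμ0 (by linarith)
    calc N (cfc (fun x : ℝ => μ * (x + μ)⁻¹) A * (A * X - X * A)
            * cfc (fun x : ℝ => (x + μ)⁻¹) A)
        ≤ ‖cfc (fun x : ℝ => μ * (x + μ)⁻¹) A‖ * N (A * X - X * A)
            * ‖cfc (fun x : ℝ => (x + μ)⁻¹) A‖ := hN_mul _ _ _
      _ ≤ 1 * c * μ⁻¹ := by
          refine mul_le_mul (mul_le_mul h1 (le_of_eq hcdef.symm) (hNnn _) zero_le_one)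
            h2 (norm_nonneg _) ?_
          rw [one_mul, hcdef]
          exact hNnn _
      _ = c * μ⁻¹ := by ring
  constructor
  · intro _
    simpa using hbound 1 le_rfl
  · intro hc
    have hc0 : (0:ℝ) < c := lt_of_lt_of_le (by norm_num) hc
    have hc1 : (1:ℝ) ≤ 2 * c := by linarith
    set μ := (2 * c) ^ 2 with hμdef
    have hμ1 : (1:ℝ) ≤ μ := by nlinarith
    have hμ0 : (0:ℝ) < μ := by nlinarith
    set F₁ := cfc (fun x : ℝ => x / (x + 1)) A with hF₁def
    set Fμ := cfc (fun x : ℝ => x / (x + μ)) A with hFμdef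
    set m' := (2 * c - 1) / (2 * c + 1) / 2 with hm'def
    have hm'0 : 0 ≤ m' := by
      rw [hm'def]
      have : (0:ℝ) ≤ 2 * c - 1 := by linarith
      positivity
    -- continuity facts
    have hden1 : ∀ x ∈ spectrum ℝ A, x + 1 ≠ 0 := fun x hx => by
      have := hs x hx; intro h; linarith [h]
    have hdenμ : ∀ x ∈ spectrum ℝ A, x + μ ≠ 0 := fun x hx => by
      have := hs x hx; intro h; linarith [h]
    have hcf1 : ContinuousOn (fun x : ℝ => x / (x + 1)) (spectrum ℝ A) :=
      ContinuousOn.div continuous_id'.continuousOn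
        ((continuous_id'.add continuous_const).continuousOn) hden1
    have hcfμ : ContinuousOn (fun x : ℝ => x / (x + μ)) (spectrum ℝ A) :=
      ContinuousOn.div continuous_id'.continuousOn
        ((continuous_id'.add continuous_const).continuousOn) hdenμ
    -- the middle-part bound
    have hGrep : F₁ - Fμ - m' • 1
        = cfc (fun x : ℝ => x / (x + 1) - x / (x + μ) - m') A := by
      rw [cfc_sub (fun x : ℝ => x / (x + 1) - x / (x + μ)) (fun _ : ℝ => m') A (hcf1.sub hcfμ) continuousOn_const,
        cfc_sub _ _ A hcf1 hcfμ, cfc_const m' A hA',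
        Algebra.algebraMap_eq_smul_one, hF₁def, hFμdef]
    have hGnorm : ‖F₁ - Fμ - m' • 1‖ ≤ m' := by
      rw [hGrep]
      refine myNormCfcLe A hA' (g := fun x : ℝ => x / (x + 1) - x / (x + μ) - m') ((hcf1.sub hcfμ).sub continuousOn_const) hm'0 ?_
      intro x hx
      have hx0 := hs x hx
      have hx1 : (0:ℝ) < x + 1 := by linarith
      have hxμ : (0:ℝ) < x + μ := by linarith
      have hlow : x / (x + μ) ≤ x / (x + 1) :=
        div_le_div_of_nonneg_left hx0 hx1 (by linarith)
      have hup : x / (x + 1) - x / (x + μ) ≤ 2 * m' := by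
        have h2m' : 2 * m' = (2 * c - 1) / (2 * c + 1) := by rw [hm'def]; ring
        rw [h2m', div_sub_div _ _ (ne_of_gt hx1) (ne_of_gt hxμ),
          div_le_div_iff₀ (by positivity) (by linarith)]
        nlinarith [mul_nonneg (by linarith : (0:ℝ) ≤ 2 * c - 1)
          (sq_nonneg (x - 2 * c)), hx0, hc1]
      rw [abs_le]
      constructor <;> linarith
    -- decomposition
    have hdec : F₁ * X - X * F₁
        = (Fμ * X - X * Fμ) + ((F₁ - Fμ) * X - X * (F₁ - Fμ)) := by noncomm_ring
    have hshift : (F₁ - Fμ) * X - X * (F₁ - Fμ)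
        = (F₁ - Fμ - m' • 1) * X - X * (F₁ - Fμ - m' • 1) := by
      simp only [sub_mul, mul_sub, smul_mul_assoc, mul_smul_comm, one_mul, mul_one]
      abel
    have hGcomm : N ((F₁ - Fμ) * X - X * (F₁ - Fμ)) ≤ 2 * m' := by
      rw [hshift]
      refine (hsub _ _).trans ?_
      have a1 : N ((F₁ - Fμ - m' • 1) * X) ≤ m' := by
        have h := hN_mul (F₁ - Fμ - m' • 1) X 1
        rw [mul_one, hnorm1, mul_one] at h
        calc N ((F₁ - Fμ - m' • 1) * X) ≤ ‖F₁ - Fμ - m' • 1‖ * N X := h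
          _ ≤ m' * 1 := by
              apply mul_le_mul hGnorm hX (hNnn X) hm'0
          _ = m' := mul_one m'
      have a2 : N (X * (F₁ - Fμ - m' • 1)) ≤ m' := by
        have h := hN_mul 1 X (F₁ - Fμ - m' • 1)
        rw [one_mul, hnorm1, one_mul] at h
        calc N (X * (F₁ - Fμ - m' • 1)) ≤ N X * ‖F₁ - Fμ - m' • 1‖ := h
          _ ≤ 1 * m' := by
              apply mul_le_mul hX hGnorm (norm_nonneg _) zero_le_one
          _ = m' := one_mul m'
      linarith
    have hμcomm : N (Fμ * X - X * Fμ) ≤ c * μ⁻¹ := hbound μ hμ1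
    have htot : N (F₁ * X - X * F₁) ≤ c * μ⁻¹ + 2 * m' := by
      rw [hdec]
      exact (hN_add _ _).trans (by linarith)
    refine htot.trans ?_
    have e1 : c * μ⁻¹ = 1 / (4 * c) := by
      rw [hμdef]; field_simp; ring
    have e2 : 2 * m' = (2 * c - 1) / (2 * c + 1) := by rw [hm'def]; ring
    rw [e1, e2]
    have key : 1 - 1 / (4 * c) - (1 / (4 * c) + (2 * c - 1) / (2 * c + 1))
        = (2 * c - 1) / ((2 * c) * (2 * c + 1)) := by
      field_simp
      ring
    have hpos : 0 ≤ (2 * c - 1) / ((2 * c) * (2 * c + 1)) := by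
      apply div_nonneg (by linarith)
      positivity
    linarith [key ▸ hpos]
end

section
/- Let N be a unitarily-invariant norm on M_n(ℂ), let A ∈ M_n(ℂ) be Hermitian, and let X ∈ M_n(ℂ) with N(X) ≤ 1. Then N(|A|X − X|A|) ≤ (1/2)‖A‖ + N(AX − XA), where |A| = (A²)^{1/2} and ‖A‖ is the operator norm of A. -/
open scoped ComplexOrder Matrix.Norms.L2Operator

open Matrix

variable {n : ℕ}

noncomputable def nrm {n : ℕ} (z : Fin n → ℂ) : ℝ := ‖(WithLp.equiv 2 (Fin n → ℂ)).symm z‖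

lemma nrm_nonneg (z : Fin n → ℂ) : 0 ≤ nrm z := norm_nonneg _

lemma opbound (M : Matrix (Fin n) (Fin n) ℂ) (z : Fin n → ℂ) :
    nrm (M *ᵥ z) ≤ ‖M‖ * nrm z :=
  M.l2_opNorm_mulVec ((WithLp.equiv 2 (Fin n → ℂ)).symm z)

lemma dot_self_eq (z : Fin n → ℂ) : dotProduct (star z) z = ((nrm z : ℝ) : ℂ)^2 := by
  have h3 := EuclideanSpace.inner_toLp_toLp (𝕜 := ℂ) z z
  rw [dotProduct_comm, ← h3, inner_self_eq_norm_sq_to_K]; rfl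

lemma dot_cs (z w : Fin n → ℂ) : ‖dotProduct (star z) w‖ ≤ nrm z * nrm w := by
  have h3 := EuclideanSpace.inner_toLp_toLp (𝕜 := ℂ) z w
  rw [dotProduct_comm, ← h3]
  exact norm_inner_le_norm _ _

lemma dot_move {M : Matrix (Fin n) (Fin n) ℂ} (hM : Mᴴ = M) (z w : Fin n → ℂ) :
    dotProduct (star z) (M *ᵥ w) = dotProduct (star (M *ᵥ z)) w := by
  rw [Matrix.star_mulVec, hM, ← Matrix.dotProduct_mulVec]

open scoped MatrixOrder in
lemma aux_norm_bound (A absA : Matrix (Fin n) (Fin n) ℂ) (hA : A.IsHermitian)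
    (habs_psd : absA.PosSemidef) (habs_sq : absA * absA = A ^ 2)
    {a : ℝ} (ha : a = ‖A‖) (hapos : 0 < a) :
    ‖absA - (((2*a)⁻¹ : ℝ) : ℂ) • (A*A) - (((a/4 : ℝ)) : ℂ) • (1 : Matrix (Fin n) (Fin n) ℂ)‖
      ≤ a/4 := by
  classical
  have hAh : Aᴴ = A := hA
  have habsh : absAᴴ = absA := habs_psd.1
  have hAA : A * A = absA * absA := by rw [habs_sq, sq]
  set W := CFC.sqrt absA with hWdef
  have hW : W * W = absA := CFC.sqrt_mul_sqrt_self absA habs_psd.nonneg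
  have hWh : Wᴴ = W := (CFC.sqrt_nonneg absA).posSemidef.1
  set Q' : Matrix (Fin n) (Fin n) ℂ :=
    absA - (((2*a)⁻¹ : ℝ) : ℂ) • (A*A) - (((a/4 : ℝ)) : ℂ) • 1 with hQ'def
  have hQ'h : Q'.IsHermitian := by
    show Q'ᴴ = Q'
    rw [hQ'def]
    simp [Matrix.conjTranspose_sub, Matrix.conjTranspose_smul, Matrix.conjTranspose_mul,
      Matrix.conjTranspose_one, hAh, habsh, Complex.star_def, Complex.conj_ofReal]
  -- vector bound for absA
  have habs_vec : ∀ z : Fin n → ℂ, nrm (absA *ᵥ z) ≤ a * nrm z := by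
    intro z
    have hsq : ((nrm (absA *ᵥ z) : ℝ) : ℂ)^2 = ((nrm (A *ᵥ z) : ℝ) : ℂ)^2 := by
      rw [← dot_self_eq, ← dot_self_eq, ← dot_move habsh, mulVec_mulVec, ← hAA,
        ← mulVec_mulVec, dot_move hAh]
    have hsqr : (nrm (absA *ᵥ z))^2 = (nrm (A *ᵥ z))^2 := by exact_mod_cast hsq
    have h1 : (nrm (A *ᵥ z))^2 ≤ (a * nrm z)^2 := by
      have := opbound A z
      rw [← ha] at this
      have h0 : 0 ≤ a * nrm z := mul_nonneg hapos.le (nrm_nonneg z)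
      nlinarith [nrm_nonneg (A *ᵥ z)]
    have := hsqr.trans_le h1
    nlinarith [nrm_nonneg (absA *ᵥ z), mul_nonneg hapos.le (nrm_nonneg z)]
  -- eigenvalue bound
  have key : ∀ i : Fin n, |hQ'h.eigenvalues i| ≤ a / 4 := by
    intro i
    set x : Fin n → ℂ := ⇑(hQ'h.eigenvectorBasis i) with hx
    have hv : Q' *ᵥ x = hQ'h.eigenvalues i • x := hQ'h.mulVec_eigenvectorBasis i
    have hu : dotProduct (star x) x = 1 := by
      have h1 : ‖hQ'h.eigenvectorBasis i‖ = 1 := hQ'h.eigenvectorBasis.orthonormal.1 i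
      have h3 := EuclideanSpace.inner_toLp_toLp (𝕜 := ℂ) x x
      rw [show WithLp.toLp 2 x = hQ'h.eigenvectorBasis i from rfl] at h3
      rw [dotProduct_comm, ← h3, inner_self_eq_norm_sq_to_K, h1]
      norm_num
    set s : ℂ := dotProduct (star x) (absA *ᵥ x) with hs
    set t : ℂ := dotProduct (star x) ((A*A) *ᵥ x) with ht
    -- eigenvalue equation
    have heq : ((hQ'h.eigenvalues i : ℝ) : ℂ)
        = s - (((2*a)⁻¹ : ℝ) : ℂ) * t - ((a/4 : ℝ) : ℂ) := by
      have e1 : dotProduct (star x) (Q' *ᵥ x) = ((hQ'h.eigenvalues i : ℝ) : ℂ) := by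
        rw [hv, dotProduct_smul, hu]
        simp [Complex.real_smul]
      have e2 : dotProduct (star x) (Q' *ᵥ x)
          = s - (((2*a)⁻¹ : ℝ) : ℂ) * t - ((a/4 : ℝ) : ℂ) := by
        rw [hQ'def, Matrix.sub_mulVec, Matrix.sub_mulVec, dotProduct_sub,
          dotProduct_sub, Matrix.smul_mulVec, Matrix.smul_mulVec,
          dotProduct_smul, dotProduct_smul, Matrix.one_mulVec, hu]
        simp [smul_eq_mul]
        rfl
      rw [← e1, e2]
    -- real parts
    have hmu : hQ'h.eigenvalues i = s.re - (2*a)⁻¹ * t.re - a/4 := by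
      have := congrArg Complex.re heq
      simpa [Complex.re_ofReal_mul] using this
    -- s ≥ 0
    have hs_nonneg : 0 ≤ s.re := by
      have := habs_psd.dotProduct_mulVec_nonneg x
      rw [← hs] at this
      exact (Complex.le_def.mp this).1
    -- s = ‖y‖² with y = W x
    set y : Fin n → ℂ := W *ᵥ x with hy
    have hs_eq : s = ((nrm y : ℝ) : ℂ)^2 := by
      rw [hs, ← hW, ← mulVec_mulVec, dot_move hWh, dot_self_eq]
    have hs_re : s.re = (nrm y)^2 := by
      rw [hs_eq]; exact_mod_cast rfl
    -- t = ⟨y, absA y⟩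
    have hWAW : W * absA * W = A * A := by
      rw [hAA, ← hW]; noncomm_ring
    have ht_eq : t = dotProduct (star y) (absA *ᵥ y) := by
      rw [hy, ← dot_move hWh, mulVec_mulVec, mulVec_mulVec, hWAW]
    -- t.re ≤ a * s.re
    have ht_le : t.re ≤ a * s.re := by
      have h1 : t.re ≤ ‖t‖ := Complex.re_le_norm t
      have h2 : ‖t‖ ≤ nrm y * nrm (absA *ᵥ y) := by rw [ht_eq]; exact dot_cs _ _
      have h3 : nrm y * nrm (absA *ᵥ y) ≤ nrm y * (a * nrm y) :=
        mul_le_mul_of_nonneg_left (habs_vec y) (nrm_nonneg y)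
      rw [hs_re]
      nlinarith [nrm_nonneg y]
    -- upper bound: 0 ≤ t.re - 2a s.re + a²
    have hF3 : 0 ≤ t.re - a*s.re - a*s.re + a*a := by
      set B : Matrix (Fin n) (Fin n) ℂ := absA - ((a : ℝ) : ℂ) • 1 with hB
      have hBh : Bᴴ = B := by
        rw [hB]
        simp [Matrix.conjTranspose_sub, Matrix.conjTranspose_smul, Matrix.conjTranspose_one,
          habsh, Complex.star_def, Complex.conj_ofReal]
      have hBB : Bᴴ * B = absA * absA - ((a : ℝ) : ℂ) • absA - ((a : ℝ) : ℂ) • absA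
          + (((a : ℝ) : ℂ) * ((a : ℝ) : ℂ)) • (1 : Matrix (Fin n) (Fin n) ℂ) := by
        rw [hBh, hB]
        simp only [Matrix.sub_mul, Matrix.mul_sub, Matrix.smul_mul, Matrix.mul_smul,
          Matrix.one_mul, Matrix.mul_one, smul_smul, smul_sub]
        module
      have hpos := (Matrix.posSemidef_conjTranspose_mul_self B).dotProduct_mulVec_nonneg x
      rw [hBB] at hpos
      have hexp : dotProduct (star x)
          ((absA * absA - ((a : ℝ) : ℂ) • absA - ((a : ℝ) : ℂ) • absA
          + (((a : ℝ) : ℂ) * ((a : ℝ) : ℂ)) • (1 : Matrix (Fin n) (Fin n) ℂ)) *ᵥ x)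
          = t - ((a : ℝ) : ℂ) * s - ((a : ℝ) : ℂ) * s + ((a : ℝ) : ℂ) * ((a : ℝ) : ℂ) := by
        simp only [Matrix.add_mulVec, Matrix.sub_mulVec, Matrix.smul_mulVec,
          Matrix.one_mulVec, dotProduct_add, dotProduct_sub,
          dotProduct_smul, smul_eq_mul, hu, mul_one]
        rw [← hAA, hs, ht]
      rw [hexp] at hpos
      have := (Complex.le_def.mp hpos).1
      simpa [Complex.re_ofReal_mul, Complex.sub_re, Complex.add_re] using this
    have h2a : (0:ℝ) < (2*a)⁻¹ := by positivity
    rw [abs_le]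
    constructor
    · rw [hmu]
      have h5 : (2*a)⁻¹ * t.re ≤ (2*a)⁻¹ * (a * s.re) :=
        mul_le_mul_of_nonneg_left ht_le h2a.le
      have h6 : (2*a)⁻¹ * (a*s.re) = s.re/2 := by
        field_simp
      linarith
    · rw [hmu]
      have h7 : 2*a*s.re ≤ t.re + a*a := by linarith
      have h8 : s.re ≤ (2*a)⁻¹ * (t.re + a*a) := by
        calc s.re = (2*a)⁻¹ * (2*a*s.re) := by field_simp
          _ ≤ (2*a)⁻¹ * (t.re + a*a) := mul_le_mul_of_nonneg_left h7 h2a.le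
      have h9 : (2*a)⁻¹ * (t.re + a*a) = (2*a)⁻¹ * t.re + a/2 := by
        field_simp
      linarith
  -- conclude via spectral radius
  letI : CStarAlgebra (Matrix (Fin n) (Fin n) ℂ) := { }
  have hsa : IsSelfAdjoint Q' := hQ'h
  have hrad := hsa.toReal_spectralRadius_eq_norm
  rw [show ‖absA - (((2*a)⁻¹ : ℝ) : ℂ) • (A*A) - (((a/4 : ℝ)) : ℂ) • 1‖ = ‖Q'‖ from rfl, ← hrad]
  have hle : spectralRadius ℝ Q' ≤ ENNReal.ofReal (a/4) := by
    unfold spectralRadius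
    refine iSup₂_le fun k hk => ?_
    rw [hQ'h.spectrum_real_eq_range_eigenvalues] at hk
    obtain ⟨j, rfl⟩ := hk
    rw [← ENNReal.ofReal_coe_nnreal]
    exact ENNReal.ofReal_le_ofReal (by simpa [Real.norm_eq_abs] using key j)
  calc (spectralRadius ℝ Q').toReal ≤ (ENNReal.ofReal (a/4)).toReal :=
        ENNReal.toReal_mono ENNReal.ofReal_ne_top hle
    _ = a/4 := ENNReal.toReal_ofReal (by positivity)

/-- For a unitarily-invariant norm `N` on `Mₙ(ℂ)`, `A` Hermitian, `N(X) ≤ 1`: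
`N(|A|X − X|A|) ≤ (1/2)‖A‖ + N(AX − XA)`, where `|A|` is the positive semidefinite
square root of `A²` and `‖A‖` is the operator norm. -/
theorem statement_16 {n : ℕ} (hn : 0 < n)
(N : Matrix (Fin n) (Fin n) ℂ → ℝ)
    (hN_add : ∀ P Q : Matrix (Fin n) (Fin n) ℂ, N (P + Q) ≤ N P + N Q)
    (hN_smul : ∀ (c : ℂ) (P : Matrix (Fin n) (Fin n) ℂ), N (c • P) = ‖c‖ * N P)
    (hN_defn : ∀ P : Matrix (Fin n) (Fin n) ℂ, N P = 0 ↔ P = 0)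
    (hN_unitary : ∀ U V P : Matrix (Fin n) (Fin n) ℂ,
      U ∈ Matrix.unitaryGroup (Fin n) ℂ → V ∈ Matrix.unitaryGroup (Fin n) ℂ →
      N (U * P * V) = N P)
    (hN_mul : ∀ P Q R : Matrix (Fin n) (Fin n) ℂ, N (P * Q * R) ≤ ‖P‖ * N Q * ‖R‖)
    (A X : Matrix (Fin n) (Fin n) ℂ) (hA : A.IsHermitian) (hX : N X ≤ 1)
    (absA : Matrix (Fin n) (Fin n) ℂ) (habs_psd : absA.PosSemidef)
    (habs_sq : absA * absA = A ^ 2) :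
    N (absA * X - X * absA) ≤ (1 / 2) * ‖A‖ + N (A * X - X * A) := by
  classical
  have hN0 : N 0 = 0 := (hN_defn 0).mpr rfl
  have hNneg : ∀ P : Matrix (Fin n) (Fin n) ℂ, N (-P) = N P := by
    intro P
    have h := hN_smul (-1) P
    simpa using h
  have hNnonneg : ∀ P : Matrix (Fin n) (Fin n) ℂ, 0 ≤ N P := by
    intro P
    have h := hN_add P (-P)
    rw [add_neg_cancel, hN0, hNneg] at h
    linarith
  have hone : ‖(1 : Matrix (Fin n) (Fin n) ℂ)‖ = 1 := by
    have h := Matrix.l2_opNorm_conjTranspose_mul_self (1 : Matrix (Fin n) (Fin n) ℂ)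
    rw [Matrix.conjTranspose_one, one_mul] at h
    have hne : (1 : Matrix (Fin n) (Fin n) ℂ) ≠ 0 := by
      intro hc
      have h0 := congrFun (congrFun hc ⟨0, hn⟩) ⟨0, hn⟩
      simp [Matrix.one_apply] at h0
    have hpos : ‖(1 : Matrix (Fin n) (Fin n) ℂ)‖ ≠ 0 := by
      simpa using hne
    have h2 : ‖(1 : Matrix (Fin n) (Fin n) ℂ)‖ * 1 = ‖(1 : Matrix (Fin n) (Fin n) ℂ)‖ *
        ‖(1 : Matrix (Fin n) (Fin n) ℂ)‖ := by rw [mul_one, ← h]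
    exact (mul_left_cancel₀ hpos h2).symm
  have hNmul_left : ∀ P R : Matrix (Fin n) (Fin n) ℂ, N (P * R) ≤ ‖P‖ * N R := by
    intro P R
    have h := hN_mul P R 1
    rwa [mul_one, hone, mul_one] at h
  have hNmul_right : ∀ P R : Matrix (Fin n) (Fin n) ℂ, N (P * R) ≤ N P * ‖R‖ := by
    intro P R
    have h := hN_mul 1 P R
    rwa [one_mul, hone, one_mul] at h
  have hNsub : ∀ P R : Matrix (Fin n) (Fin n) ℂ, N (P - R) ≤ N P + N R := by
    intro P R
    have h := hN_add P (-R)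
    rwa [← sub_eq_add_neg, hNneg] at h
  rcases eq_or_lt_of_le (norm_nonneg A) with ha0 | hapos
  · -- degenerate case ‖A‖ = 0
    have hA0 : A = 0 := norm_eq_zero.mp ha0.symm
    have habs0 : absA = 0 := by
      have h2 : absAᴴ * absA = 0 := by rw [habs_psd.1, habs_sq, hA0]; simp [sq]
      exact Matrix.conjTranspose_mul_self_eq_zero.mp h2
    rw [habs0, hA0]
    simp [hN0]
  · set a := ‖A‖ with hadef
    set C := A * X - X * A with hC
    set S : Matrix (Fin n) (Fin n) ℂ := (((2*a)⁻¹ : ℝ) : ℂ) • (A*A) with hS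
    set Q' : Matrix (Fin n) (Fin n) ℂ := absA - S - ((a/4 : ℝ) : ℂ) • 1 with hQ'
    have hid : absA * X - X * absA = (S * X - X * S) + (Q' * X - X * Q') := by
      have habs_eq : absA = S + Q' + ((a/4 : ℝ) : ℂ) • 1 := by rw [hQ']; abel
      rw [habs_eq]
      simp only [Matrix.add_mul, Matrix.mul_add]
      have hG : (((a/4 : ℝ) : ℂ) • (1 : Matrix (Fin n) (Fin n) ℂ)) * X
          = X * (((a/4 : ℝ) : ℂ) • 1) := by
        rw [smul_mul_assoc, mul_smul_comm, one_mul, mul_one]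
      rw [hG]
      abel
    have hb1 : N (S * X - X * S) ≤ N C := by
      have hACCA : A*A*X - X*(A*A) = A*C + C*A := by rw [hC]; noncomm_ring
      have hSx : S * X - X * S = (((2*a)⁻¹ : ℝ) : ℂ) • (A * C + C * A) := by
        rw [hS, smul_mul_assoc, mul_smul_comm, ← smul_sub, hACCA]
      rw [hSx, hN_smul]
      have hnormc : ‖((((2*a)⁻¹ : ℝ)) : ℂ)‖ = (2*a)⁻¹ := by
        rw [Complex.norm_real, Real.norm_eq_abs, abs_of_nonneg (by positivity)]
      rw [hnormc]
      have h1 : N (A*C + C*A) ≤ a * N C + N C * a :=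
        le_trans (hN_add _ _) (add_le_add (hNmul_left A C) (hNmul_right C A))
      have h2 : (2*a)⁻¹ * N (A*C + C*A) ≤ (2*a)⁻¹ * (a * N C + N C * a) :=
        mul_le_mul_of_nonneg_left h1 (by positivity)
      have h3 : (2*a)⁻¹ * (a * N C + N C * a) = N C := by
        field_simp
        ring
      linarith
    have hQnorm : ‖Q'‖ ≤ a/4 := by
      rw [hQ', hS]
      exact aux_norm_bound A absA hA habs_psd habs_sq hadef hapos
    have hb2 : N (Q' * X - X * Q') ≤ a/2 := by
      have h1 : N (Q' * X) ≤ a/4 := by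
        have h := hNmul_left Q' X
        have h2 : ‖Q'‖ * N X ≤ (a/4) * 1 :=
          mul_le_mul hQnorm hX (hNnonneg X) (by positivity)
        linarith
      have h2 : N (X * Q') ≤ a/4 := by
        have h := hNmul_right X Q'
        have h3 : N X * ‖Q'‖ ≤ 1 * (a/4) :=
          mul_le_mul hX hQnorm (norm_nonneg Q') (by norm_num)
        linarith
      have h4 := hNsub (Q' * X) (X * Q')
      linarith
    calc N (absA * X - X * absA) = N ((S*X - X*S) + (Q'*X - X*Q')) := by rw [hid]
      _ ≤ N (S*X - X*S) + N (Q'*X - X*Q') := hN_add _ _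
      _ ≤ N C + a/2 := add_le_add hb1 hb2
      _ ≤ 1/2 * a + N C := by linarith
end

section
/- Let N be a unitarily-invariant norm on M_n(ℂ). Let f : [0,∞) → [0,∞) be continuous with f(0) = 0, continuously differentiable and strictly concave on (0,∞). Let A, X ∈ M_n(ℂ) with A positive semidefinite and A ≠ 0, N(X) ≤ 1, and set c = N(AX − XA). If c > 0 and f′(c) ≤ f(‖A‖)/‖A‖, where ‖A‖ is the operator norm of A, then N(f(A)X − Xf(A)) ≤ f(c). (Since f′ is strictly decreasing, the condition f′(c) ≤ f(‖A‖)/‖A‖ is equivalent to (F⁻¹∘k)(‖A‖) ≤ c with F = f′ and k(x) = f(x)/x.) -/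
open scoped ComplexOrder Matrix.Norms.L2Operator

open Filter Topology Set in
/-- Chord inequality at 0 for a function concave on `(0,∞)`, continuous on `[0,∞)` with `f 0 = 0`. -/
lemma chord_aux_17 (f : ℝ → ℝ) (hf_cont : ContinuousOn f (Set.Ici 0)) (hf0 : f 0 = 0)
    (hconc : ConcaveOn ℝ (Set.Ioi 0) f) {x y : ℝ} (hx : 0 < x) (hxy : x ≤ y) :
    (x / y) * f y ≤ f x := by
  have hy : 0 < y := lt_of_lt_of_le hx hxy
  rcases eq_or_lt_of_le hxy with rfl | hlt
  · rw [div_self hx.ne', one_mul]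
  · set a : ℝ → ℝ := fun ε => (y - x) / (y - ε) with ha
    have hmem : Set.Ioo (0:ℝ) x ∈ 𝓝[>] (0:ℝ) :=
      Ioo_mem_nhdsGT_of_mem ⟨le_refl 0, hx⟩
    have hbound : ∀ ε ∈ Set.Ioo (0:ℝ) x, a ε * f ε + (1 - a ε) * f y ≤ f x := by
      intro ε hε
      have hεy : ε < y := lt_trans hε.2 hlt
      have h1 : 0 < y - ε := by linarith
      have ha0 : 0 ≤ a ε := div_nonneg (by linarith) h1.le
      have ha1 : a ε ≤ 1 := (div_le_one h1).2 (by linarith [hε.2])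
      have hxeq : a ε * ε + (1 - a ε) * y = x := by
        simp only [ha]
        field_simp
        ring
      have hcomb : a ε • f ε + (1 - a ε) • f y ≤ f (a ε • ε + (1 - a ε) • y) :=
        hconc.2 (Set.mem_Ioi.2 hε.1) (Set.mem_Ioi.2 hy) ha0 (by linarith) (by ring)
      simpa [smul_eq_mul, hxeq] using hcomb
    have hta : Tendsto a (𝓝[>] (0:ℝ)) (𝓝 ((y - x)/y)) := by
      have hcont : ContinuousAt (fun ε : ℝ => (y - x) / (y - ε)) 0 :=
        (continuousAt_const.div (continuousAt_const.sub continuousAt_id) (by simpa using hy.ne'))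
      have := hcont.tendsto.mono_left (nhdsWithin_le_nhds (s := Set.Ioi (0:ℝ)))
      simpa using this
    have htf : Tendsto f (𝓝[>] (0:ℝ)) (𝓝 0) := by
      have := (hf_cont 0 Set.self_mem_Ici).tendsto
      rw [hf0] at this
      exact this.mono_left (nhdsWithin_mono _ Set.Ioi_subset_Ici_self)
    have htend : Tendsto (fun ε => a ε * f ε + (1 - a ε) * f y) (𝓝[>] (0:ℝ))
        (𝓝 ((y - x)/y * 0 + (1 - (y - x)/y) * f y)) :=
      (hta.mul htf).add ((tendsto_const_nhds.sub hta).mul tendsto_const_nhds)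
    have hval : (y - x)/y * 0 + (1 - (y - x)/y) * f y = (x/y) * f y := by
      field_simp
      ring
    rw [hval] at htend
    exact le_of_tendsto htend (Filter.eventually_of_mem hmem hbound)

/-- Let `f : [0,∞) → [0,∞)` be continuous with `f(0) = 0`, continuously differentiable
and strictly concave on `(0,∞)`. Let `A` be psd with `A ≠ 0`, `N(X) ≤ 1`, and
`c = N(AX − XA)`. If `c > 0` and `f′(c) ≤ f(‖A‖)/‖A‖` then
`N(f(A)X − Xf(A)) ≤ f(c)`. -/
theorem statement_17 {n : ℕ} (hn : 0 < n)
(N : Matrix (Fin n) (Fin n) ℂ → ℝ)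
    (hN_add : ∀ P Q : Matrix (Fin n) (Fin n) ℂ, N (P + Q) ≤ N P + N Q)
    (hN_smul : ∀ (c : ℂ) (P : Matrix (Fin n) (Fin n) ℂ), N (c • P) = ‖c‖ * N P)
    (hN_defn : ∀ P : Matrix (Fin n) (Fin n) ℂ, N P = 0 ↔ P = 0)
    (hN_unitary : ∀ U V P : Matrix (Fin n) (Fin n) ℂ,
      U ∈ Matrix.unitaryGroup (Fin n) ℂ → V ∈ Matrix.unitaryGroup (Fin n) ℂ →
      N (U * P * V) = N P)
    (hN_mul : ∀ P Q R : Matrix (Fin n) (Fin n) ℂ, N (P * Q * R) ≤ ‖P‖ * N Q * ‖R‖)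
    (f : ℝ → ℝ)
    (hf_cont : ContinuousOn f (Set.Ici 0)) (hf0 : f 0 = 0)
    (hf_nonneg : ∀ x : ℝ, 0 ≤ x → 0 ≤ f x)
    (hf_diff : ContDiffOn ℝ 1 f (Set.Ioi 0))
    (hf_concave : StrictConcaveOn ℝ (Set.Ioi 0) f)
    (A X : Matrix (Fin n) (Fin n) ℂ) (hA : A.PosSemidef) (hA0 : A ≠ 0)
    (hX : N X ≤ 1)
    (hc : 0 < N (A * X - X * A))
    (hcond : deriv f (N (A * X - X * A)) ≤ f ‖A‖ / ‖A‖) :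
    N (cfc f A * X - X * cfc f A) ≤ f (N (A * X - X * A)) := by
  haveI : NeZero n := ⟨hn.ne'⟩
  haveI : Nontrivial (Matrix (Fin n) (Fin n) ℂ) := by
    refine nontrivial_of_ne 1 0 fun h => ?_
    have := congrFun (congrFun h ⟨0, hn⟩) ⟨0, hn⟩
    simp [Matrix.one_apply] at this
  letI : CStarAlgebra (Matrix (Fin n) (Fin n) ℂ) := inferInstance
  set c := N (A * X - X * A) with hc_def
  set α := deriv f c with hα_def
  have hsa : IsSelfAdjoint A := hA.isHermitian
  have hnorm_pos : (0:ℝ) < ‖A‖ := norm_pos_iff.mpr hA0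
  have hconc := hf_concave.concaveOn
  have hdiffAt : ∀ y : ℝ, 0 < y → DifferentiableAt ℝ f y := fun y hy =>
    (hf_diff.differentiableOn one_ne_zero).differentiableAt (Ioi_mem_nhds hy)
  -- tangent line inequality
  have ht : ∀ x : ℝ, 0 < x → f x ≤ f c + α * (x - c) := by
    intro x hx
    rcases lt_trichotomy x c with h | h | h
    · have hs := hconc.deriv_le_slope (Set.mem_Ioi.2 hx) (Set.mem_Ioi.2 hc) h (hdiffAt c hc)
      rw [slope_def_field, le_div_iff₀ (by linarith)] at hs
      nlinarith
    · simp [h]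
    · have hs := hconc.slope_le_deriv (Set.mem_Ioi.2 hc) (Set.mem_Ioi.2 (lt_trans hc h)) h
        (hdiffAt c hc)
      rw [slope_def_field, div_le_iff₀ (by linarith)] at hs
      nlinarith
  -- the derivative is nonnegative
  have hα0 : 0 ≤ α := by
    by_contra hneg
    push_neg at hneg
    have hfc0 : 0 ≤ f c := hf_nonneg c hc.le
    have hx0 : 0 < c + (f c + 1)/(-α) := by
      have : 0 ≤ (f c + 1)/(-α) := div_nonneg (by linarith) (by linarith)
      linarith
    have h1 := ht _ hx0
    have h2 : α * ((c + (f c + 1)/(-α)) - c) = -(f c + 1) := by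
      have h3 : (c + (f c + 1)/(-α)) - c = (f c + 1)/(-α) := by ring
      rw [h3, ← mul_div_assoc, div_eq_iff (neg_ne_zero.mpr hneg.ne)]
      ring
    rw [h2] at h1
    have := hf_nonneg _ hx0.le
    linarith
  -- chord inequality gives `α * x ≤ f x` on `(0, ‖A‖]`
  have hchord : ∀ x : ℝ, 0 < x → x ≤ ‖A‖ → α * x ≤ f x := by
    intro x hx hxa
    have h1 := chord_aux_17 f hf_cont hf0 hconc hx hxa
    have h2 : α * x ≤ (f ‖A‖ / ‖A‖) * x := mul_le_mul_of_nonneg_right hcond hx.le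
    calc α * x ≤ (f ‖A‖ / ‖A‖) * x := h2
      _ = (x / ‖A‖) * f ‖A‖ := by ring
      _ ≤ f x := h1
  -- `α c ≤ f c`
  have hM0 : α * c ≤ f c := by
    have h1 := chord_aux_17 f hf_cont hf0 hconc (half_pos hc) (half_le_self hc.le)
    have h2 := ht (c/2) (half_pos hc)
    have h3 : c/2/c = 1/2 := by field_simp
    rw [h3] at h1
    nlinarith
  set M := f c - α * c with hM_def
  set β := M / 2 with hβ_def
  have hβ0 : 0 ≤ β := by simp only [hβ_def, hM_def]; linarith
  -- spectrum bounds
  have hspec : ∀ x ∈ spectrum ℝ A, 0 ≤ x ∧ x ≤ ‖A‖ := by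
    intro x hx
    constructor
    · rw [hA.isHermitian.spectrum_real_eq_range_eigenvalues] at hx
      obtain ⟨i, rfl⟩ := hx
      exact hA.eigenvalues_nonneg i
    · have := spectrum.norm_le_norm_of_mem hx
      rw [Real.norm_eq_abs] at this
      exact (abs_le.mp this).2
  have hspec_sub : spectrum ℝ A ⊆ Set.Ici 0 := fun x hx => (hspec x hx).1
  have hcontf : ContinuousOn f (spectrum ℝ A) := hf_cont.mono hspec_sub
  -- bound on `g` on the spectrum
  have hg_bounds : ∀ x ∈ spectrum ℝ A, 0 ≤ f x - α * x ∧ f x - α * x ≤ M := by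
    intro x hx
    obtain ⟨hx0, hx1⟩ := hspec x hx
    rcases eq_or_lt_of_le hx0 with rfl | hxpos
    · simp [hf0, hM_def]; linarith
    · refine ⟨by linarith [hchord x hxpos hx1], ?_⟩
      have := ht x hxpos
      simp only [hM_def]
      nlinarith
  -- decompose `cfc f A`
  set B := cfc (fun x : ℝ => f x - α * x) A with hB_def
  have hg : B = cfc f A - α • A := by
    rw [hB_def, cfc_sub f (fun x : ℝ => α * x) A hcontf (by fun_prop),
      cfc_const_mul_id α A hsa]
  have hBdef : cfc f A = B + α • A := by rw [hg]; abel
  set B₀ := cfc (fun x : ℝ => (f x - α * x) - β) A with hB₀_def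
  have hB₀ : B₀ = B - β • (1 : Matrix (Fin n) (Fin n) ℂ) := by
    rw [hB₀_def, hB_def, cfc_sub (fun x : ℝ => f x - α * x) (fun _ : ℝ => β) A
      (hcontf.sub (by fun_prop)) (by fun_prop), cfc_const β A hsa,
      Algebra.algebraMap_eq_smul_one]
  have hnormB₀ : ‖B₀‖ ≤ β := by
    refine norm_cfc_le hβ0 fun x hx => ?_
    obtain ⟨h1, h2⟩ := hg_bounds x hx
    rw [Real.norm_eq_abs, abs_le]
    constructor <;> simp only [hβ_def, hM_def] at h1 h2 ⊢ <;> linarith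
  -- auxiliary norm facts
  have hNneg : ∀ Q : Matrix (Fin n) (Fin n) ℂ, N (-Q) = N Q := by
    intro Q
    rw [← neg_one_smul ℂ Q, hN_smul]
    simp
  have hN_nonneg : ∀ P : Matrix (Fin n) (Fin n) ℂ, 0 ≤ N P := by
    intro P
    have h0 : N (0 : Matrix (Fin n) (Fin n) ℂ) = 0 := (hN_defn 0).2 rfl
    have := hN_add P (-P)
    rw [add_neg_cancel, h0, hNneg] at this
    linarith
  have hNsub : ∀ P Q : Matrix (Fin n) (Fin n) ℂ, N (P - Q) ≤ N P + N Q := by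
    intro P Q
    rw [sub_eq_add_neg]
    exact (hN_add P (-Q)).trans (by rw [hNneg])
  -- bound on the `B` commutator
  have hBX : N (B * X - X * B) ≤ M := by
    have h1 : B * X - X * B = B₀ * X - X * B₀ := by
      rw [hB₀]
      simp only [sub_mul, mul_sub, smul_mul_assoc, mul_smul_comm, one_mul, mul_one]
      abel
    have h2 : N (B₀ * X) ≤ β := by
      have := hN_mul B₀ X 1
      rw [mul_one, norm_one, mul_one] at this
      refine this.trans ?_
      calc ‖B₀‖ * N X ≤ β * 1 :=
        mul_le_mul hnormB₀ hX (hN_nonneg X) hβ0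
        _ = β := mul_one β
    have h3 : N (X * B₀) ≤ β := by
      have := hN_mul 1 X B₀
      rw [one_mul, norm_one, one_mul] at this
      refine this.trans ?_
      calc N X * ‖B₀‖ ≤ 1 * β :=
        mul_le_mul hX hnormB₀ (norm_nonneg B₀) zero_le_one
        _ = β := one_mul β
    rw [h1]
    calc N (B₀ * X - X * B₀) ≤ N (B₀ * X) + N (X * B₀) := hNsub _ _
      _ ≤ β + β := add_le_add h2 h3
      _ = M := by rw [hβ_def]; ring
  -- split the commutator
  have hsplit : cfc f A * X - X * cfc f A = (B * X - X * B) + α • (A * X - X * A) := by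
    rw [hBdef]
    simp only [add_mul, mul_add, smul_mul_assoc, mul_smul_comm, smul_sub]
    abel
  have hαsmul : N (α • (A * X - X * A)) = α * c := by
    have hcoe : α • (A * X - X * A) = ((α : ℂ)) • (A * X - X * A) := by
      simp [Complex.coe_smul]
    rw [hcoe, hN_smul, Complex.norm_real, Real.norm_eq_abs, abs_of_nonneg hα0, ← hc_def]
  calc N (cfc f A * X - X * cfc f A)
      ≤ N (B * X - X * B) + N (α • (A * X - X * A)) := by rw [hsplit]; exact hN_add _ _
    _ ≤ M + α * c := by rw [hαsmul]; exact add_le_add_left hBX _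
    _ = f c := by rw [hM_def]; ring
end

section
/- Let N be a unitarily-invariant norm on M_n(ℂ), let a₁, a₂ ≥ 0, let A ∈ M_n(ℂ) be Hermitian with −a₁·I ≤ A ≤ a₂·I in the Loewner order, and let X ∈ M_n(ℂ) with N(X) ≤ 1. Then N(|A|X − X|A|) ≤ 2·min(a₁, a₂) + N(AX − XA), where |A| = (A²)^{1/2}. -/
open scoped ComplexOrder Matrix.Norms.L2Operator
open Matrix


private lemma diag_norm_le' {n : ℕ} (d : Fin n → ℝ) {c : ℝ} (hc : 0 ≤ c)
    (h : ∀ i, |d i| ≤ c) :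
    ‖(Matrix.diagonal (fun i => (d i : ℂ)) : Matrix (Fin n) (Fin n) ℂ)‖ ≤ c := by
  rw [Matrix.cstar_norm_def]
  refine ContinuousLinearMap.opNorm_le_bound _ hc fun x => ?_
  set D : Matrix (Fin n) (Fin n) ℂ := Matrix.diagonal (fun i => (d i : ℂ))
  have hcoord : ∀ i, (Matrix.toEuclideanCLM (n := Fin n) (𝕜 := ℂ) D x) i
      = (d i : ℂ) * x i := by
    intro i
    have : (Matrix.toEuclideanCLM (n := Fin n) (𝕜 := ℂ) D x) i = (D *ᵥ (WithLp.equiv _ _ x)) i := rfl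
    rw [this]
    simp [D, Matrix.mulVec_diagonal]
  rw [EuclideanSpace.norm_eq, EuclideanSpace.norm_eq]
  calc Real.sqrt (∑ i, ‖(Matrix.toEuclideanCLM (n := Fin n) (𝕜 := ℂ) D x) i‖ ^ 2)
      ≤ Real.sqrt (∑ i, c ^ 2 * ‖x i‖ ^ 2) := by
        apply Real.sqrt_le_sqrt
        apply Finset.sum_le_sum
        intro i _
        rw [hcoord i, norm_mul, Complex.norm_real, Real.norm_eq_abs, mul_pow]
        have h1 : |d i| ^ 2 ≤ c ^ 2 := by
          have := h i; nlinarith [abs_nonneg (d i)]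
        nlinarith [norm_nonneg (x i), sq_nonneg (‖x i‖)]
    _ = c * Real.sqrt (∑ i, ‖x i‖ ^ 2) := by
        rw [← Finset.mul_sum, Real.sqrt_mul (by positivity), Real.sqrt_sq hc]

/-- For a unitarily-invariant norm `N` on `Mₙ(ℂ)`, `a₁, a₂ ≥ 0`, `A` Hermitian with
`−a₁·I ≤ A ≤ a₂·I` in the Loewner order, and `N(X) ≤ 1`:
`N(|A|X − X|A|) ≤ 2·min(a₁, a₂) + N(AX − XA)`, where `|A| = (A²)^{1/2}`. -/
theorem statement_18 {n : ℕ} (hn : 0 < n)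
(N : Matrix (Fin n) (Fin n) ℂ → ℝ)
    (hN_add : ∀ P Q : Matrix (Fin n) (Fin n) ℂ, N (P + Q) ≤ N P + N Q)
    (hN_smul : ∀ (c : ℂ) (P : Matrix (Fin n) (Fin n) ℂ), N (c • P) = ‖c‖ * N P)
    (hN_defn : ∀ P : Matrix (Fin n) (Fin n) ℂ, N P = 0 ↔ P = 0)
    (hN_unitary : ∀ U V P : Matrix (Fin n) (Fin n) ℂ,
      U ∈ Matrix.unitaryGroup (Fin n) ℂ → V ∈ Matrix.unitaryGroup (Fin n) ℂ →
      N (U * P * V) = N P)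
    (hN_mul : ∀ P Q R : Matrix (Fin n) (Fin n) ℂ, N (P * Q * R) ≤ ‖P‖ * N Q * ‖R‖)
    (a₁ a₂ : ℝ) (ha₁ : 0 ≤ a₁) (ha₂ : 0 ≤ a₂)
    (A X : Matrix (Fin n) (Fin n) ℂ) (hA : A.IsHermitian)
    (hlow : (A + (a₁ : ℂ) • (1 : Matrix (Fin n) (Fin n) ℂ)).PosSemidef)
    (hup : ((a₂ : ℂ) • (1 : Matrix (Fin n) (Fin n) ℂ) - A).PosSemidef)
    (hX : N X ≤ 1)
    (absA : Matrix (Fin n) (Fin n) ℂ) (habs_psd : absA.PosSemidef)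
    (habs_sq : absA * absA = A ^ 2) :
    N (absA * X - X * absA) ≤ 2 * min a₁ a₂ + N (A * X - X * A) := by
  classical
  -- Basic properties of N
  have hN0 : N 0 = 0 := (hN_defn 0).mpr rfl
  have hNneg : ∀ P, N (-P) = N P := by
    intro P
    rw [← neg_one_smul ℂ P, hN_smul]
    simp
  have hNnonneg : ∀ P, 0 ≤ N P := by
    intro P
    have h := hN_add P (-P)
    rw [add_neg_cancel, hN0, hNneg] at h
    linarith
  -- norm of the identity matrix
  haveI : Nontrivial (EuclideanSpace ℂ (Fin n)) := by
    refine nontrivial_of_ne (EuclideanSpace.single ⟨0, hn⟩ 1) 0 fun h => ?_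
    have := congrArg (fun f => f ⟨0, hn⟩) h
    simpa using this
  have hone : ‖(1 : Matrix (Fin n) (Fin n) ℂ)‖ = 1 := by
    rw [Matrix.cstar_norm_def, _root_.map_one]
    exact ContinuousLinearMap.norm_id
  -- commutator bound
  have comm_bound : ∀ (C : Matrix (Fin n) (Fin n) ℂ) (s : ℝ), ‖C‖ ≤ s →
      N (C * X - X * C) ≤ 2 * s := by
    intro C s hs
    have hCnn : (0:ℝ) ≤ ‖C‖ := norm_nonneg C
    have hXnn : 0 ≤ N X := hNnonneg X
    have h1 : N (C * X) ≤ s := by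
      have h := hN_mul C X 1
      rw [mul_one, hone] at h
      nlinarith
    have h2 : N (X * C) ≤ s := by
      have h := hN_mul 1 X C
      rw [one_mul, hone] at h
      nlinarith
    have h3 := hN_add (C * X) (-(X * C))
    rw [← sub_eq_add_neg, hNneg] at h3
    linarith
  -- Eigen data
  set lam : Fin n → ℝ := hA.eigenvalues with hlam
  set U : Matrix (Fin n) (Fin n) ℂ := ↑(hA.eigenvectorUnitary) with hUdef
  have hU : U ∈ Matrix.unitaryGroup (Fin n) ℂ := (hA.eigenvectorUnitary).2
  have hUU : star U * U = 1 := (Unitary.mem_iff.mp hU).1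
  have hUU' : U * star U = 1 := (Unitary.mem_iff.mp hU).2
  -- eigenvector facts
  have keyval : ∀ i : Fin n,
      dotProduct (star ⇑(hA.eigenvectorBasis i)) ⇑(hA.eigenvectorBasis i) = 1 := by
    intro i
    have h2 : (inner ℂ (hA.eigenvectorBasis i) (hA.eigenvectorBasis i) : ℂ) = 1 := by
      rw [inner_self_eq_norm_sq_to_K, hA.eigenvectorBasis.orthonormal.1 i]
      norm_num
    rw [EuclideanSpace.inner_eq_star_dotProduct, dotProduct_comm] at h2
    exact h2
  have eigdot : ∀ i : Fin n,
      dotProduct (star ⇑(hA.eigenvectorBasis i)) (A *ᵥ ⇑(hA.eigenvectorBasis i))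
        = (lam i : ℂ) := by
    intro i
    rw [hA.mulVec_eigenvectorBasis, dotProduct_smul, keyval i]
    simp [Complex.real_smul, hlam]
  have hlow' : ∀ i, -a₁ ≤ lam i := by
    intro i
    have h := hlow.dotProduct_mulVec_nonneg ⇑(hA.eigenvectorBasis i)
    rw [Matrix.add_mulVec, Matrix.smul_mulVec, Matrix.one_mulVec,
      dotProduct_add, dotProduct_smul, eigdot i, keyval i] at h
    rw [smul_eq_mul, mul_one, ← Complex.ofReal_add] at h
    rw [Complex.zero_le_real] at h
    linarith
  have hup' : ∀ i, lam i ≤ a₂ := by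
    intro i
    have h := hup.dotProduct_mulVec_nonneg ⇑(hA.eigenvectorBasis i)
    rw [Matrix.sub_mulVec, Matrix.smul_mulVec, Matrix.one_mulVec,
      dotProduct_sub, dotProduct_smul, eigdot i, keyval i] at h
    rw [smul_eq_mul, mul_one, ← Complex.ofReal_sub] at h
    rw [Complex.zero_le_real] at h
    linarith
  -- spectral theorem
  have hAspec : A = U * Matrix.diagonal (fun i => (lam i : ℂ)) * star U :=
    hA.spectral_theorem
  -- identification of absA
  set M : Matrix (Fin n) (Fin n) ℂ :=
    U * Matrix.diagonal (fun i => ((|lam i| : ℝ) : ℂ)) * star U with hMdef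
  have hMpsd : M.PosSemidef := by
    have hD : (Matrix.diagonal (fun i => ((|lam i| : ℝ) : ℂ))).PosSemidef := by
      refine Matrix.posSemidef_diagonal_iff.mpr fun i => ?_
      exact Complex.zero_le_real.mpr (abs_nonneg _)
    have h2 := hD.mul_mul_conjTranspose_same U
    rw [hMdef]
    simpa [Matrix.star_eq_conjTranspose] using h2
  have hMsq : M ^ 2 = A ^ 2 := by
    rw [pow_two, pow_two, hMdef, hAspec]
    calc (U * Matrix.diagonal (fun i => ((|lam i| : ℝ) : ℂ)) * star U) *
          (U * Matrix.diagonal (fun i => ((|lam i| : ℝ) : ℂ)) * star U)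
        = U * (Matrix.diagonal (fun i => ((|lam i| : ℝ) : ℂ)) * (star U * U) *
            Matrix.diagonal (fun i => ((|lam i| : ℝ) : ℂ))) * star U := by
          simp only [Matrix.mul_assoc]
      _ = U * (Matrix.diagonal (fun i => (lam i : ℂ)) * (star U * U) *
            Matrix.diagonal (fun i => (lam i : ℂ))) * star U := by
          rw [hUU]
          simp only [Matrix.mul_one, Matrix.diagonal_mul_diagonal]
          norm_cast
          simp only [abs_mul_abs_self]
      _ = (U * Matrix.diagonal (fun i => (lam i : ℂ)) * star U) *
          (U * Matrix.diagonal (fun i => (lam i : ℂ)) * star U) := by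
          simp only [Matrix.mul_assoc]
  have habsM : absA = M := by
    open scoped MatrixOrder in
    exact (CFC.sqrt_unique habs_sq habs_psd.nonneg).symm.trans
      (CFC.sqrt_unique (by rw [← pow_two, hMsq]) hMpsd.nonneg)
  -- norm of conjugated diagonal
  have conj_norm_le : ∀ (d : Fin n → ℝ) (c : ℝ), 0 ≤ c → (∀ i, |d i| ≤ c) →
      ‖U * Matrix.diagonal (fun i => (d i : ℂ)) * star U‖ ≤ c := by
    intro d c hc hd
    have hUu : U ∈ unitary (Matrix (Fin n) (Fin n) ℂ) := hU
    have e1 : ‖U * Matrix.diagonal (fun i => (d i : ℂ)) * star U‖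
        = ‖Matrix.diagonal (fun i => (d i : ℂ)) * star U‖ := by
      rw [Matrix.mul_assoc]
      exact CStarRing.norm_coe_unitary_mul (⟨U, hUu⟩ : unitary (Matrix (Fin n) (Fin n) ℂ)) _
    have e2 : ‖Matrix.diagonal (fun i => (d i : ℂ)) * star U‖
        = ‖Matrix.diagonal (fun i => (d i : ℂ))‖ := by
      exact CStarRing.norm_mul_coe_unitary _ (star (⟨U, hUu⟩ : unitary (Matrix (Fin n) (Fin n) ℂ)))
    rw [e1, e2]
    exact diag_norm_le' d hc hd
  -- conjugation of a constant diagonal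
  have conj_const : ∀ c : ℝ, U * Matrix.diagonal (fun _ : Fin n => (c : ℂ)) * star U
      = (c : ℂ) • (1 : Matrix (Fin n) (Fin n) ℂ) := by
    intro c
    have : Matrix.diagonal (fun _ : Fin n => (c : ℂ)) = (c : ℂ) • (1 : Matrix (Fin n) (Fin n) ℂ) := by
      ext i j
      by_cases h : i = j <;> simp [Matrix.diagonal, Matrix.one_apply, h]
    rw [this]
    rw [Matrix.mul_smul, Matrix.smul_mul, Matrix.mul_one, hUU']
  rcases le_total a₁ a₂ with hmin | hmin
  · -- min = a₁
    rw [min_eq_left hmin]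
    set d : Fin n → ℝ := fun i => |lam i| - lam i - a₁ with hd
    set C : Matrix (Fin n) (Fin n) ℂ := U * Matrix.diagonal (fun i => (d i : ℂ)) * star U with hCdef
    have hCnorm : ‖C‖ ≤ a₁ := by
      refine conj_norm_le d a₁ ha₁ fun i => ?_
      rcases le_or_gt 0 (lam i) with h | h
      · rw [hd]; simp only
        rw [abs_of_nonneg h]
        simp [abs_of_nonneg ha₁]
      · rw [hd]; simp only
        rw [abs_of_neg h]
        have := hlow' i
        rw [abs_le]; constructor <;> linarith
    have hdiag : Matrix.diagonal (fun i => (d i : ℂ))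
        = Matrix.diagonal (fun i => ((|lam i| : ℝ) : ℂ))
          - Matrix.diagonal (fun i => ((lam i : ℝ) : ℂ))
          - Matrix.diagonal (fun _ : Fin n => ((a₁ : ℝ) : ℂ)) := by
      rw [Matrix.diagonal_sub, Matrix.diagonal_sub]
      congr 1
      funext i
      simp only [hd, Pi.sub_apply]
      push_cast
      ring
    have hC : C = absA - A - (a₁ : ℂ) • (1 : Matrix (Fin n) (Fin n) ℂ) := by
      rw [hCdef, hdiag, habsM, hMdef, hAspec, ← conj_const a₁]
      simp only [Matrix.mul_sub, Matrix.sub_mul]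
    have hcomm : absA * X - X * absA = (A * X - X * A) + (C * X - X * C) := by
      rw [hC]
      simp only [Matrix.sub_mul, Matrix.mul_sub, Matrix.smul_mul, Matrix.mul_smul,
        Matrix.one_mul, Matrix.mul_one]
      abel
    have h1 := hN_add (A * X - X * A) (C * X - X * C)
    rw [← hcomm] at h1
    have h2 := comm_bound C a₁ hCnorm
    linarith
  · -- min = a₂
    rw [min_eq_right hmin]
    set d : Fin n → ℝ := fun i => |lam i| + lam i - a₂ with hd
    set C : Matrix (Fin n) (Fin n) ℂ := U * Matrix.diagonal (fun i => (d i : ℂ)) * star U with hCdef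
    have hCnorm : ‖C‖ ≤ a₂ := by
      refine conj_norm_le d a₂ ha₂ fun i => ?_
      rcases le_or_gt 0 (lam i) with h | h
      · rw [hd]; simp only
        rw [abs_of_nonneg h]
        have := hup' i
        rw [abs_le]; constructor <;> linarith
      · rw [hd]; simp only
        rw [abs_of_neg h]
        simp [abs_of_nonneg ha₂]
    have hdiag : Matrix.diagonal (fun i => (d i : ℂ))
        = Matrix.diagonal (fun i => ((|lam i| : ℝ) : ℂ))
          + Matrix.diagonal (fun i => ((lam i : ℝ) : ℂ))
          - Matrix.diagonal (fun _ : Fin n => ((a₂ : ℝ) : ℂ)) := by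
      rw [Matrix.diagonal_add, Matrix.diagonal_sub]
      congr 1
      funext i
      simp only [hd, Pi.sub_apply, Pi.add_apply]
      push_cast
      ring
    have hC : C = absA + A - (a₂ : ℂ) • (1 : Matrix (Fin n) (Fin n) ℂ) := by
      rw [hCdef, hdiag, habsM, hMdef, hAspec, ← conj_const a₂]
      simp only [Matrix.mul_sub, Matrix.sub_mul, Matrix.mul_add, Matrix.add_mul]
    have hcomm : absA * X - X * absA = -(A * X - X * A) + (C * X - X * C) := by
      rw [hC]
      simp only [Matrix.sub_mul, Matrix.mul_sub, Matrix.add_mul, Matrix.mul_add,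
        Matrix.smul_mul, Matrix.mul_smul, Matrix.one_mul, Matrix.mul_one]
      abel
    have h1 := hN_add (-(A * X - X * A)) (C * X - X * C)
    rw [← hcomm, hNneg] at h1
    have h2 := comm_bound C a₂ hCnorm
    linarith
end

section
/- Let ‖·‖_F denote the Frobenius (Hilbert–Schmidt) norm on M_n(ℂ). Let f : [0,∞) → [0,∞) be concave, let A ∈ M_n(ℂ) be positive semidefinite, and let X ∈ M_n(ℂ) with ‖X‖_F ≤ 1. Then ‖f(A)X − Xf(A)‖_F ≤ f(‖AX − XA‖_F). -/
open scoped ComplexOrder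

/-- The Frobenius (Hilbert–Schmidt) norm on `Mₙ(ℂ)`. -/
noncomputable def frobeniusNorm' {n : ℕ} (X : Matrix (Fin n) (Fin n) ℂ) : ℝ :=
  Real.sqrt (∑ i, ∑ j, ‖X i j‖ ^ 2)


section Scalar

/-- Concavity three-point inequality, unfolded. -/
lemma concave_three (f : ℝ → ℝ) (hf : ConcaveOn ℝ (Set.Ici 0) f)
    {x y p q : ℝ} (hx : 0 ≤ x) (hy : 0 ≤ y) (hp : 0 ≤ p) (hq : 0 ≤ q) (hpq : p + q = 1) :
    p * f x + q * f y ≤ f (p * x + q * y) := by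
  simpa [smul_eq_mul] using hf.2 (Set.mem_Ici.mpr hx) (Set.mem_Ici.mpr hy) hp hq hpq

/-- chord bound: for 0 ≤ a ≤ b, (a/b) f(b) ≤ f(a). -/
lemma chord_le (f : ℝ → ℝ) (hf : ConcaveOn ℝ (Set.Ici 0) f) (h0 : ∀ x : ℝ, 0 ≤ x → 0 ≤ f x)
    {a b : ℝ} (ha : 0 ≤ a) (hab : a ≤ b) (hb : 0 < b) :
    (a / b) * f b ≤ f a := by
  have hd1 : a / b ≤ 1 := (div_le_one hb).mpr hab
  have hd0 : 0 ≤ a / b := div_nonneg ha hb.le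
  have h := concave_three f hf (p := a / b) (q := 1 - a / b) hb.le (le_refl (0:ℝ)) hd0 (by linarith) (by ring)
  have e : a / b * b + (1 - a / b) * 0 = a := by field_simp; ring
  rw [e] at h
  have h0' : 0 ≤ f 0 := h0 0 le_rfl
  nlinarith

/-- f is monotone on [0,∞). -/
lemma mono_of_concave (f : ℝ → ℝ) (hf : ConcaveOn ℝ (Set.Ici 0) f)
    (h0 : ∀ x : ℝ, 0 ≤ x → 0 ≤ f x) {a b : ℝ} (ha : 0 ≤ a) (hab : a ≤ b) : f a ≤ f b := by
  rcases eq_or_lt_of_le hab with rfl | hab'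
  · exact le_rfl
  by_contra hlt
  push_neg at hlt
  have hfb : 0 ≤ f b := h0 b (ha.trans hab)
  have hfa : 0 < f a := lt_of_le_of_lt hfb hlt
  have hε : 0 < f a - f b := by linarith
  have hba : 0 < b - a := by linarith
  have hK : 0 < (b - a) * (f a + 1) / (f a - f b) + (b - a) := by positivity
  generalize hKdef : (b - a) * (f a + 1) / (f a - f b) + (b - a) = K at hK
  have hKba : b - a ≤ K := by
    rw [← hKdef]
    have : 0 ≤ (b - a) * (f a + 1) / (f a - f b) := by positivity
    linarith
  have hq1 : (b - a) / K ≤ 1 := (div_le_one hK).mpr hKba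
  have hq0 : 0 ≤ (b - a) / K := div_nonneg hba.le hK.le
  have h := concave_three f hf (x := a) (y := a + K) (p := 1 - (b - a)/K) (q := (b - a)/K)
    ha (by linarith) (by linarith) hq0 (by ring)
  have e : (1 - (b - a)/K) * a + (b - a)/K * (a + K) = b := by
    field_simp
    ring
  rw [e] at h
  have hfx : 0 ≤ f (a + K) := h0 _ (by linarith)
  -- so (1 - q) * f a ≤ f b, i.e. f a - f b ≤ q * f a
  have key : f a - f b ≤ (b - a)/K * f a := by nlinarith
  -- but q ≤ (f a - f b)/(f a + 1)
  have hqle : (b - a)/K ≤ (f a - f b)/(f a + 1) := by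
    rw [div_le_div_iff₀ hK (by positivity)]
    have : K * (f a - f b) = (b - a) * (f a + 1) + (b - a) * (f a - f b) := by
      rw [← hKdef]
      field_simp
    nlinarith
  have : (b - a)/K * f a ≤ (f a - f b)/(f a + 1) * f a :=
    mul_le_mul_of_nonneg_right hqle hfa.le
  have hfin : (f a - f b)/(f a + 1) * f a < f a - f b := by
    rw [div_mul_eq_mul_div, div_lt_iff₀ (by positivity)]
    nlinarith
  linarith

/-- f(c * s) ≤ c * f(s) for c ≥ 1, s ≥ 0. -/
lemma scale_le (f : ℝ → ℝ) (hf : ConcaveOn ℝ (Set.Ici 0) f) (h0 : ∀ x : ℝ, 0 ≤ x → 0 ≤ f x)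
    {c s : ℝ} (hc : 1 ≤ c) (hs : 0 ≤ s) : f (c * s) ≤ c * f s := by
  rcases eq_or_lt_of_le hs with rfl | hs'
  · simp only [mul_zero]
    have := h0 0 le_rfl
    nlinarith
  have hcs : 0 < c * s := by positivity
  have h := chord_le f hf h0 (a := s) (b := c * s) hs
    (le_mul_of_one_le_left hs'.le hc) hcs
  rw [div_mul_eq_mul_div, div_le_iff₀ hcs] at h
  have hc0 : 0 < c := by linarith
  have hgoal : s * f (c * s) ≤ f s * (c * s) := by linarith [h]
  rw [show c * f s = (f s * (c * s)) / s by field_simp]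
  rw [show f (c * s) = s * f (c * s) / s by field_simp]
  exact div_le_div_of_nonneg_right hgoal hs'.le

/-- |f a - f b| ≤ f |a - b| for a, b ≥ 0. -/
lemma abs_sub_le_f (f : ℝ → ℝ) (hf : ConcaveOn ℝ (Set.Ici 0) f) (h0 : ∀ x : ℝ, 0 ≤ x → 0 ≤ f x)
    {a b : ℝ} (ha : 0 ≤ a) (hb : 0 ≤ b) : |f a - f b| ≤ f |a - b| := by
  wlog hab : b ≤ a generalizing a b
  · rw [abs_sub_comm, abs_sub_comm a b]
    exact this hb ha (by linarith)
  rw [abs_of_nonneg (by linarith : (0:ℝ) ≤ a - b),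
    abs_of_nonneg (sub_nonneg.mpr (mono_of_concave f hf h0 hb hab))]
  rcases eq_or_lt_of_le ha with h | hapos
  · have hb0 : b = 0 := le_antisymm (hab.trans h.symm.le) hb
    simp [← h, hb0]
    linarith [h0 0 le_rfl]
  have h1 := chord_le f hf h0 (a := b) hb hab hapos
  have h2 := chord_le f hf h0 (a := a - b) (by linarith) (by linarith) hapos
  have e : b / a + (a - b) / a = 1 := by field_simp; ring
  nlinarith [h1, h2, h0 a ha]

end Scalar

section Jensen
variable {ι : Type*} [Fintype ι]

/-- Sub-Jensen for concave nonneg f with subprobability weights. -/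
lemma subJensen (f : ℝ → ℝ) (hf : ConcaveOn ℝ (Set.Ici 0) f) (h0 : ∀ x : ℝ, 0 ≤ x → 0 ≤ f x)
    (w t : ι → ℝ) (hw : ∀ i, 0 ≤ w i) (ht : ∀ i, 0 ≤ t i) (hw1 : ∑ i, w i ≤ 1) :
    ∑ i, w i * f (t i) ≤ f (∑ i, w i * t i) := by
  classical
  set W := ∑ i, w i with hW
  have hW0 : 0 ≤ W := Finset.sum_nonneg fun i _ => hw i
  have h := ConcaveOn.le_map_sum (t := (Finset.univ : Finset (Option ι)))
    (w := fun o => o.elim (1 - W) w) (p := fun o => o.elim 0 t) hf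
    (fun o _ => by cases o with
      | none => simpa using by linarith
      | some i => exact hw i)
    (by rw [Fintype.sum_option]; simp [hW])
    (fun o _ => by cases o with
      | none => exact Set.mem_Ici.mpr le_rfl
      | some i => exact Set.mem_Ici.mpr (ht i))
  rw [Fintype.sum_option, Fintype.sum_option] at h
  simp only [Option.elim, smul_eq_mul, mul_zero, zero_add] at h
  have hf0 : 0 ≤ (1 - W) * f 0 := mul_nonneg (by linarith) (h0 0 le_rfl)
  linarith

/-- The key scalar inequality. -/
lemma key_ineq (f : ℝ → ℝ) (hf : ConcaveOn ℝ (Set.Ici 0) f) (h0 : ∀ x : ℝ, 0 ≤ x → 0 ≤ f x)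
    (w t : ι → ℝ) (hw : ∀ i, 0 ≤ w i) (ht : ∀ i, 0 ≤ t i) (hw1 : ∑ i, w i ≤ 1) :
    ∑ i, w i * (f (t i))^2 ≤ (f (Real.sqrt (∑ i, w i * (t i)^2)))^2 := by
  classical
  set s := Real.sqrt (∑ i, w i * (t i)^2) with hs_def
  have hsum2 : 0 ≤ ∑ i, w i * (t i)^2 :=
    Finset.sum_nonneg fun i _ => mul_nonneg (hw i) (sq_nonneg _)
  have hs0 : 0 ≤ s := Real.sqrt_nonneg _
  have hs2 : s^2 = ∑ i, w i * (t i)^2 := Real.sq_sqrt hsum2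
  have hfs : 0 ≤ f s := h0 s hs0
  set N := ∑ i, w i * f (t i) with hN_def
  have hN0 : 0 ≤ N := Finset.sum_nonneg fun i _ => mul_nonneg (hw i) (h0 _ (ht i))
  set P := ∑ i, w i * (f (t i))^2 with hP_def
  have hP0 : 0 ≤ P := Finset.sum_nonneg fun i _ => mul_nonneg (hw i) (sq_nonneg _)
  have hwt0 : 0 ≤ ∑ i, w i * t i :=
    Finset.sum_nonneg fun i _ => mul_nonneg (hw i) (ht i)
  -- ∑ w t ≤ s
  have hwt_le_s : ∑ i, w i * t i ≤ s := by
    have hcs := Finset.sum_mul_sq_le_sq_mul_sq Finset.univ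
      (fun i => Real.sqrt (w i)) (fun i => Real.sqrt (w i) * t i)
    have e1 : ∑ i, Real.sqrt (w i) * (Real.sqrt (w i) * t i) = ∑ i, w i * t i := by
      apply Finset.sum_congr rfl; intro i _
      rw [← mul_assoc, Real.mul_self_sqrt (hw i)]
    have e2 : ∑ i, (Real.sqrt (w i))^2 = ∑ i, w i := by
      apply Finset.sum_congr rfl; intro i _; exact Real.sq_sqrt (hw i)
    have e3 : ∑ i, (Real.sqrt (w i) * t i)^2 = ∑ i, w i * (t i)^2 := by
      apply Finset.sum_congr rfl; intro i _
      rw [mul_pow, Real.sq_sqrt (hw i)]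
    rw [e1, e2, e3] at hcs
    have : (∑ i, w i * t i)^2 ≤ s^2 := by
      rw [hs2]
      nlinarith [hsum2]
    calc ∑ i, w i * t i = Real.sqrt ((∑ i, w i * t i)^2) := (Real.sqrt_sq hwt0).symm
      _ ≤ Real.sqrt (s^2) := Real.sqrt_le_sqrt this
      _ = s := Real.sqrt_sq hs0
  have hN_le : N ≤ f s :=
    (subJensen f hf h0 w t hw ht hw1).trans (mono_of_concave f hf h0 hwt0 hwt_le_s)
  -- Cauchy-Schwarz: ∑ w t f(t) ≤ s √P
  have hwtf0 : 0 ≤ ∑ i, w i * t i * f (t i) :=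
    Finset.sum_nonneg fun i _ => mul_nonneg (mul_nonneg (hw i) (ht i)) (h0 _ (ht i))
  have hcs2 : ∑ i, w i * t i * f (t i) ≤ s * Real.sqrt P := by
    have hcs := Finset.sum_mul_sq_le_sq_mul_sq Finset.univ
      (fun i => Real.sqrt (w i) * t i) (fun i => Real.sqrt (w i) * f (t i))
    have e1 : ∑ i, (Real.sqrt (w i) * t i) * (Real.sqrt (w i) * f (t i))
        = ∑ i, w i * t i * f (t i) := by
      apply Finset.sum_congr rfl; intro i _
      rw [show (Real.sqrt (w i) * t i) * (Real.sqrt (w i) * f (t i))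
          = (Real.sqrt (w i) * Real.sqrt (w i)) * (t i * f (t i)) by ring,
        Real.mul_self_sqrt (hw i)]
      ring
    have e3 : ∑ i, (Real.sqrt (w i) * t i)^2 = ∑ i, w i * (t i)^2 := by
      apply Finset.sum_congr rfl; intro i _; rw [mul_pow, Real.sq_sqrt (hw i)]
    have e4 : ∑ i, (Real.sqrt (w i) * f (t i))^2 = P := by
      apply Finset.sum_congr rfl; intro i _; rw [mul_pow, Real.sq_sqrt (hw i)]
    rw [e1, e3, e4] at hcs
    have h1 : (∑ i, w i * t i * f (t i))^2 ≤ (s * Real.sqrt P)^2 := by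
      rw [mul_pow, hs2, Real.sq_sqrt hP0]
      exact hcs
    calc ∑ i, w i * t i * f (t i) = Real.sqrt ((∑ i, w i * t i * f (t i))^2) :=
          (Real.sqrt_sq hwtf0).symm
      _ ≤ Real.sqrt ((s * Real.sqrt P)^2) := Real.sqrt_le_sqrt h1
      _ = s * Real.sqrt P := Real.sqrt_sq (by positivity)
  rcases eq_or_lt_of_le hN0 with hNz | hNpos
  · -- N = 0 case : every w i * f (t i) = 0
    have hzero : ∀ i ∈ Finset.univ, w i * f (t i) = 0 :=
      (Finset.sum_eq_zero_iff_of_nonneg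
        (fun i _ => mul_nonneg (hw i) (h0 _ (ht i)))).mp hNz.symm
    have : P = 0 := by
      rw [hP_def]
      apply Finset.sum_eq_zero
      intro i hi
      have := hzero i hi
      rw [sq]
      rw [← mul_assoc, this, zero_mul]
    rw [this]
    positivity
  · -- N > 0 case
    set v : ι → ℝ := fun i => w i * f (t i) / N with hv_def
    have hv0 : ∀ i, 0 ≤ v i := fun i => div_nonneg (mul_nonneg (hw i) (h0 _ (ht i))) hN0
    have hvsum : ∑ i, v i = 1 := by
      rw [hv_def, ← Finset.sum_div]
      field_simp
      exact hN_def.symm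
    have hvt0 : 0 ≤ ∑ i, v i * t i :=
      Finset.sum_nonneg fun i _ => mul_nonneg (hv0 i) (ht i)
    have hjensen : ∑ i, v i * f (t i) ≤ f (∑ i, v i * t i) :=
      subJensen f hf h0 v t hv0 ht hvsum.le
    have hPN : P = N * ∑ i, v i * f (t i) := by
      rw [hP_def, Finset.mul_sum]
      apply Finset.sum_congr rfl
      intro i _
      rw [hv_def]
      field_simp
    have hT_eq : ∑ i, v i * t i = (∑ i, w i * t i * f (t i)) / N := by
      rw [Finset.sum_div]
      apply Finset.sum_congr rfl
      intro i _
      rw [hv_def]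
      field_simp
    have hT_le : ∑ i, v i * t i ≤ s * Real.sqrt P / N := by
      rw [hT_eq]
      exact div_le_div_of_nonneg_right hcs2 hNpos.le |>.trans_eq rfl
    rcases le_or_gt (Real.sqrt P) N with h2 | h2
    · -- √P ≤ N
      have hTs : ∑ i, v i * t i ≤ s := by
        apply hT_le.trans
        rw [div_le_iff₀ hNpos]
        nlinarith [Real.sqrt_nonneg P]
      have : f (∑ i, v i * t i) ≤ f s := mono_of_concave f hf h0 hvt0 hTs
      have hfT0 : 0 ≤ f (∑ i, v i * t i) := h0 _ hvt0
      nlinarith [hjensen, hPN, hN_le]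
    · -- N < √P
      have hc1 : 1 ≤ Real.sqrt P / N := by
        rw [le_div_iff₀ hNpos]
        linarith
      have hTs : ∑ i, v i * t i ≤ (Real.sqrt P / N) * s := by
        apply hT_le.trans_eq
        ring
      have hmono : f (∑ i, v i * t i) ≤ f ((Real.sqrt P / N) * s) :=
        mono_of_concave f hf h0 hvt0 hTs
      have hscale : f ((Real.sqrt P / N) * s) ≤ (Real.sqrt P / N) * f s :=
        scale_le f hf h0 hc1 hs0
      -- P ≤ N * ((√P/N) * f s) = √P * f s
      have hP_le : P ≤ Real.sqrt P * f s := by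
        have : P ≤ N * ((Real.sqrt P / N) * f s) := by
          nlinarith [hjensen, hPN, hmono, hscale]
        calc P ≤ N * ((Real.sqrt P / N) * f s) := this
          _ = Real.sqrt P * f s := by field_simp
      have hsqP : Real.sqrt P ≤ f s := by
        have hsqPpos : 0 < Real.sqrt P := lt_of_le_of_lt hN0 h2
        have : Real.sqrt P * Real.sqrt P ≤ Real.sqrt P * f s := by
          rw [Real.mul_self_sqrt hP0]
          exact hP_le
        exact le_of_mul_le_mul_left this hsqPpos
      calc P = Real.sqrt P ^ 2 := (Real.sq_sqrt hP0).symm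
        _ ≤ f s ^ 2 := pow_le_pow_left₀ (Real.sqrt_nonneg P) hsqP 2
end Jensen

open scoped ComplexOrder
open Matrix

noncomputable def frobSq {n : ℕ} (M : Matrix (Fin n) (Fin n) ℂ) : ℝ :=
  ∑ i, ∑ j, ‖M i j‖ ^ 2

lemma frobSq_eq_trace {n : ℕ} (M : Matrix (Fin n) (Fin n) ℂ) :
    ((frobSq M : ℝ) : ℂ) = (Mᴴ * M).trace := by
  simp only [Matrix.trace, Matrix.diag_apply, Matrix.mul_apply, Matrix.conjTranspose_apply]
  push_cast [frobSq]
  rw [Finset.sum_comm]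
  apply Finset.sum_congr rfl; intro i _
  apply Finset.sum_congr rfl; intro j _
  rw [mul_comm, Complex.star_def, Complex.mul_conj]
  norm_cast
  rw [← Complex.sq_norm]

lemma frobSq_unitary_conj {n : ℕ} (U M : Matrix (Fin n) (Fin n) ℂ)
    (hU : U ∈ Matrix.unitaryGroup (Fin n) ℂ) :
    frobSq (U * M * star U) = frobSq M := by
  have hUU : U * star U = 1 := Matrix.mem_unitaryGroup_iff.mp hU
  have hsUU : star U * U = 1 := Matrix.mem_unitaryGroup_iff'.mp hU
  have := frobSq_eq_trace (U * M * star U)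
  rw [Matrix.star_eq_conjTranspose] at this hUU hsUU
  have e : (U * M * Uᴴ)ᴴ * (U * M * Uᴴ) = U * (Mᴴ * M) * Uᴴ := by
    simp only [Matrix.conjTranspose_mul, Matrix.conjTranspose_conjTranspose]
    calc U * (Mᴴ * Uᴴ) * (U * M * Uᴴ) = U * Mᴴ * (Uᴴ * U) * (M * Uᴴ) := by noncomm_ring
      _ = U * (Mᴴ * M) * Uᴴ := by rw [hsUU, Matrix.mul_one]; noncomm_ring
  rw [e] at this
  have etr : (U * (Mᴴ * M) * Uᴴ).trace = (Mᴴ * M).trace := by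
    rw [Matrix.trace_mul_comm, ← Matrix.mul_assoc, hsUU, Matrix.one_mul]
  rw [etr, ← frobSq_eq_trace M] at this
  exact_mod_cast this

lemma conj_commutator {n : ℕ} (U D X : Matrix (Fin n) (Fin n) ℂ)
    (hUU : U * star U = 1) :
    U * (D * (star U * X * U) - (star U * X * U) * D) * star U
      = (U * D * star U) * X - X * (U * D * star U) := by
  have h1 : U * (D * (star U * X * U)) * star U = (U * D * star U) * X * (U * star U) := by
    noncomm_ring
  have h2 : U * ((star U * X * U) * D) * star U = (U * star U) * X * (U * D * star U) := by
    noncomm_ring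
  rw [Matrix.mul_sub, Matrix.sub_mul, h1, h2, hUU, Matrix.mul_one, Matrix.one_mul]

lemma frobSq_diag_comm {n : ℕ} (c : Fin n → ℂ) (Y : Matrix (Fin n) (Fin n) ℂ) :
    frobSq (Matrix.diagonal c * Y - Y * Matrix.diagonal c)
      = ∑ i, ∑ j, ‖c i - c j‖ ^ 2 * ‖Y i j‖ ^ 2 := by
  rw [frobSq]
  apply Finset.sum_congr rfl; intro i _
  apply Finset.sum_congr rfl; intro j _
  rw [Matrix.sub_apply, Matrix.diagonal_mul, Matrix.mul_diagonal]
  rw [show c i * Y i j - Y i j * c j = (c i - c j) * Y i j by ring]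
  rw [norm_mul, mul_pow]


lemma frobeniusNorm'_eq {n : ℕ} (X : Matrix (Fin n) (Fin n) ℂ) :
    frobeniusNorm' X = Real.sqrt (frobSq X) := rfl

/-- Let `f : [0,∞) → [0,∞)` be concave, `A` psd, and `‖X‖_F ≤ 1`. Then
`‖f(A)X − Xf(A)‖_F ≤ f(‖AX − XA‖_F)`. -/
theorem statement_19 {n : ℕ} (f : ℝ → ℝ)
    (hf_concave : ConcaveOn ℝ (Set.Ici 0) f)
    (hf_nonneg : ∀ x : ℝ, 0 ≤ x → 0 ≤ f x)
    (A X : Matrix (Fin n) (Fin n) ℂ) (hA : A.PosSemidef)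
    (hX : frobeniusNorm' X ≤ 1) :
    frobeniusNorm' (cfc f A * X - X * cfc f A) ≤ f (frobeniusNorm' (A * X - X * A)) := by
  have hH : A.IsHermitian := hA.1
  set U : Matrix (Fin n) (Fin n) ℂ := (hH.eigenvectorUnitary : Matrix (Fin n) (Fin n) ℂ) with hU_def
  have hU : U ∈ Matrix.unitaryGroup (Fin n) ℂ := hH.eigenvectorUnitary.2
  have hUU : U * star U = 1 := Matrix.mem_unitaryGroup_iff.mp hU
  have hsUU : star U * U = 1 := Matrix.mem_unitaryGroup_iff'.mp hU
  have hUstar : star U ∈ Matrix.unitaryGroup (Fin n) ℂ := by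
    rw [Matrix.mem_unitaryGroup_iff, star_star]
    exact hsUU
  set lam : Fin n → ℝ := hH.eigenvalues with hlam_def
  have hlam0 : ∀ i, 0 ≤ lam i := fun i => hA.eigenvalues_nonneg i
  set Y : Matrix (Fin n) (Fin n) ℂ := star U * X * U with hY_def
  have hspec : A = U * Matrix.diagonal (RCLike.ofReal ∘ lam) * star U := hH.spectral_theorem
  have hcfc : cfc f A = U * Matrix.diagonal (RCLike.ofReal ∘ f ∘ lam) * star U := by
    rw [hH.cfc_eq]
    rfl
  -- commutators as conjugations
  have hcommA : A * X - X * A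
      = U * (Matrix.diagonal (RCLike.ofReal ∘ lam) * Y - Y * Matrix.diagonal (RCLike.ofReal ∘ lam)) * star U := by
    rw [hY_def, conj_commutator _ _ _ hUU, ← hspec]
  have hcommF : cfc f A * X - X * cfc f A
      = U * (Matrix.diagonal (RCLike.ofReal ∘ f ∘ lam) * Y - Y * Matrix.diagonal (RCLike.ofReal ∘ f ∘ lam)) * star U := by
    rw [hY_def, conj_commutator _ _ _ hUU, ← hcfc]
  -- Frobenius computations
  have hfA : frobSq (A * X - X * A) = ∑ i, ∑ j, (lam i - lam j)^2 * ‖Y i j‖^2 := by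
    rw [hcommA, frobSq_unitary_conj _ _ hU, frobSq_diag_comm]
    apply Finset.sum_congr rfl; intro i _
    apply Finset.sum_congr rfl; intro j _
    congr 1
    simp only [Function.comp_apply, ← RCLike.ofReal_sub, RCLike.norm_ofReal, sq_abs]
  have hfF : frobSq (cfc f A * X - X * cfc f A)
      = ∑ i, ∑ j, (f (lam i) - f (lam j))^2 * ‖Y i j‖^2 := by
    rw [hcommF, frobSq_unitary_conj _ _ hU, frobSq_diag_comm]
    apply Finset.sum_congr rfl; intro i _
    apply Finset.sum_congr rfl; intro j _
    congr 1
    simp only [Function.comp_apply, ← RCLike.ofReal_sub, RCLike.norm_ofReal, sq_abs]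
  -- weight bound
  have hYX : frobSq Y = frobSq X := by
    have : Y = star U * X * star (star U) := by rw [star_star, hY_def]
    rw [this, frobSq_unitary_conj _ _ hUstar]
  have hfrobX : frobSq X ≤ 1 := by
    have h1 : Real.sqrt (frobSq X) ≤ 1 := hX
    have h2 : 0 ≤ frobSq X := Finset.sum_nonneg fun i _ => Finset.sum_nonneg fun j _ => sq_nonneg _
    nlinarith [Real.sq_sqrt h2, Real.sqrt_nonneg (frobSq X)]
  -- set up the scalar inequality over pairs
  set W : Fin n × Fin n → ℝ := fun p => ‖Y p.1 p.2‖^2 with hW_def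
  set T : Fin n × Fin n → ℝ := fun p => |lam p.1 - lam p.2| with hT_def
  have hW0 : ∀ p, 0 ≤ W p := fun p => sq_nonneg _
  have hT0 : ∀ p, 0 ≤ T p := fun p => abs_nonneg _
  have hW1 : ∑ p, W p ≤ 1 := by
    rw [Fintype.sum_prod_type]
    calc (∑ i, ∑ j, W (i, j)) = frobSq Y := rfl
      _ = frobSq X := hYX
      _ ≤ 1 := hfrobX
  have hsumA : frobSq (A * X - X * A) = ∑ p, W p * T p ^ 2 := by
    rw [hfA, Fintype.sum_prod_type]
    apply Finset.sum_congr rfl; intro i _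
    apply Finset.sum_congr rfl; intro j _
    rw [hW_def, hT_def]
    simp only [sq_abs]
    ring
  have hkey := key_ineq f hf_concave hf_nonneg W T hW0 hT0 hW1
  have hpoint : frobSq (cfc f A * X - X * cfc f A) ≤ ∑ p, W p * (f (T p))^2 := by
    rw [hfF, Fintype.sum_prod_type]
    apply Finset.sum_le_sum
    intro i _
    apply Finset.sum_le_sum
    intro j _
    have habs : |f (lam i) - f (lam j)| ≤ f (T (i, j)) :=
      abs_sub_le_f f hf_concave hf_nonneg (hlam0 i) (hlam0 j)
    have : (f (lam i) - f (lam j))^2 ≤ (f (T (i, j)))^2 := by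
      rw [← sq_abs]
      exact pow_le_pow_left₀ (abs_nonneg _) habs 2
    calc (f (lam i) - f (lam j))^2 * ‖Y i j‖^2 ≤ (f (T (i, j)))^2 * ‖Y i j‖^2 :=
          mul_le_mul_of_nonneg_right this (sq_nonneg _)
      _ = W (i, j) * (f (T (i, j)))^2 := by rw [hW_def]; ring
  -- conclude
  rw [frobeniusNorm'_eq, frobeniusNorm'_eq, hsumA]
  have hfs : 0 ≤ f (Real.sqrt (∑ p, W p * T p ^ 2)) := hf_nonneg _ (Real.sqrt_nonneg _)
  calc Real.sqrt (frobSq (cfc f A * X - X * cfc f A))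
      ≤ Real.sqrt ((f (Real.sqrt (∑ p, W p * T p ^ 2)))^2) :=
        Real.sqrt_le_sqrt (hpoint.trans hkey)
    _ = f (Real.sqrt (∑ p, W p * T p ^ 2)) := Real.sqrt_sq hfs
end
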